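/- arXiv:1111.6952 — 7 statements merged into one kernel-verified Lean document; each statement's English description precedes it below -/
import Mathlib

section
/- Let p_n, q_n : Ω → ℝ be measurable exponents with uniform bounds 1 < c ≤ p_n(x), q_n(x) ≤ C, with ‖p_n − p‖_{L^∞(Ω)} → 0 and ‖q_n − q‖_{L^∞(Ω)} → 0, and assume moreover that p_n ≥ p and q_n ≤ q pointwise on Ω. Then S(p_n(·),q_n(·),Ω) → S(p(·),q(·),Ω). -/
open MeasureTheory Metric Set Filter Topology

noncomputable section

abbrev EN (N : ℕ) : Type := EuclideanSpace ℝ (Fin N)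

/-- Luxemburg norm of `u` on `U` w.r.t. the measure `m` and variable exponent `r`. -/
noncomputable def luxNormM {N : ℕ} (m : Measure (EN N)) (U : Set (EN N))
    (r u : EN N → ℝ) : ℝ :=
  sInf {l : ℝ | 0 < l ∧ (∫ x in U, (|u x| / l) ^ (r x) ∂m) ≤ 1}

/-- Luxemburg norm w.r.t. Lebesgue measure. -/
noncomputable def luxNorm {N : ℕ} (U : Set (EN N)) (r u : EN N → ℝ) : ℝ :=
  luxNormM volume U r u

/-- `v` is a `C_c^∞` test function on `U`. -/
def TestFn {N : ℕ} (U : Set (EN N)) (v : EN N → ℝ) : Prop :=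
  ContDiff ℝ (⊤ : ℕ∞) v ∧ HasCompactSupport v ∧ tsupport v ⊆ U

/-- Pointwise length of the gradient of `v`. -/
noncomputable def grad {N : ℕ} (v : EN N → ℝ) (x : EN N) : ℝ := ‖fderiv ℝ v x‖

/-- The variable exponent Sobolev constant `S(p(·),q(·),U)`. -/
noncomputable def sobolevConst {N : ℕ} (p q : EN N → ℝ) (U : Set (EN N)) : ℝ :=
  sInf {c : ℝ | ∃ v : EN N → ℝ, TestFn U v ∧ v ≠ 0 ∧
    c = luxNorm U p (grad v) / luxNorm U q v}

/-- The critical Sobolev exponent of the value `pval` in dimension `N`. -/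
noncomputable def pstar (N : ℕ) (pval : ℝ) : ℝ := N * pval / (N - pval)

/-- `K_r⁻¹`, the best constant in the classical Sobolev inequality. -/
noncomputable def Kinv (N : ℕ) (r : ℝ) : ℝ :=
  sobolevConst (fun _ => r) (fun _ => pstar N r) (univ : Set (EN N))

/-- The localized Sobolev constant `S̄_x`. -/
noncomputable def SbarAt {N : ℕ} (p q : EN N → ℝ) (x : EN N) : ℝ :=
  sSup {s : ℝ | ∃ ε : ℝ, 0 < ε ∧ s = sobolevConst p q (ball x ε)}

/-- The critical set `A`. -/
def critSet {N : ℕ} (p q : EN N → ℝ) (Ω : Set (EN N)) : Set (EN N) :=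
  {x | x ∈ Ω ∧ p x < N ∧ q x = pstar N (p x)}

/-- The critical constant `S̄ = inf_{x ∈ A} S̄_x`. -/
noncomputable def SbarCrit {N : ℕ} (p q : EN N → ℝ) (Ω : Set (EN N)) : ℝ :=
  sInf (SbarAt p q '' critSet p q Ω)

/-- A modulus of continuity `ρ` with `ρ(t) log(1/t) → 0` as `t → 0+`. -/
def Modulus (ρ : ℝ → ℝ) : Prop :=
  Tendsto (fun t => ρ t * Real.log (1 / t)) (nhdsWithin 0 (Set.Ioi 0)) (nhds 0)

/-- `f` has modulus of continuity `ρ` on `Ω`. -/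
def HasModulusOn {N : ℕ} (f : EN N → ℝ) (ρ : ℝ → ℝ) (Ω : Set (EN N)) : Prop :=
  ∀ x ∈ Ω, ∀ y ∈ Ω, |f x - f y| ≤ ρ (dist x y)

namespace S5

variable {N : ℕ}

lemma luxNorm_def (Ω : Set (EN N)) (r u : EN N → ℝ) :
    luxNorm Ω r u = sInf {l : ℝ | 0 < l ∧ (∫ x in Ω, (|u x| / l) ^ (r x)) ≤ 1} := rfl

lemma meas_int {r u : EN N → ℝ} (hr : Measurable r) (hu : Measurable u) {l : ℝ} (hl : 0 ≤ l) :
    Measurable fun x => (|u x| / l) ^ (r x) := by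
  have hb : Measurable fun x => |u x| / l := hu.abs.div_const l
  have heq : (fun x => (|u x| / l) ^ (r x)) =
      fun x => if |u x| / l = 0 then (if r x = 0 then 1 else 0)
        else Real.exp (Real.log (|u x| / l) * r x) := by
    funext x
    rw [Real.rpow_def_of_nonneg (div_nonneg (abs_nonneg _) hl)]
  rw [heq]
  refine Measurable.ite (hb (measurableSet_singleton 0)) ?_ ?_
  · exact Measurable.ite (hr (measurableSet_singleton 0)) measurable_const measurable_const
  · exact Real.measurable_exp.comp ((Real.measurable_log.comp hb).mul hr)

lemma int_on {Ω : Set (EN N)} (hΩm : MeasurableSet Ω) (hfin : volume Ω < ⊤)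
    {r u : EN N → ℝ} (hr : Measurable r) (hu : Measurable u) {l M Cb : ℝ} (hl : 0 < l)
    (hM : ∀ x, |u x| ≤ M)
    (hrb : ∀ x ∈ Ω, 0 ≤ r x ∧ r x ≤ Cb) :
    IntegrableOn (fun x => (|u x| / l) ^ (r x)) Ω := by
  have hmax : (1:ℝ) ≤ max 1 (M / l) := le_max_left _ _
  refine Integrable.mono' (g := fun _ => (max 1 (M/l)) ^ Cb)
    ((integrableOn_const_iff).mpr (Or.inr hfin))
    ((meas_int hr hu hl.le).aestronglyMeasurable) ?_
  filter_upwards [ae_restrict_mem hΩm] with x hx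
  rw [Real.norm_of_nonneg (Real.rpow_nonneg (by positivity) _)]
  calc (|u x| / l) ^ r x ≤ (max 1 (M/l)) ^ r x := by
        refine Real.rpow_le_rpow (by positivity) ?_ (hrb x hx).1
        exact le_trans (by gcongr; exact hM x) (le_max_right _ _)
    _ ≤ (max 1 (M/l)) ^ Cb := Real.rpow_le_rpow_of_exponent_le hmax (hrb x hx).2

lemma lux_bddBelow (Ω : Set (EN N)) (r u : EN N → ℝ) :
    BddBelow {l : ℝ | 0 < l ∧ (∫ x in Ω, (|u x| / l) ^ (r x)) ≤ 1} :=
  ⟨0, fun _ hx => hx.1.le⟩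

lemma lux_nonneg (Ω : Set (EN N)) (r u : EN N → ℝ) : 0 ≤ luxNorm Ω r u :=
  Real.sInf_nonneg fun _ hl => hl.1.le

lemma lux_le {Ω : Set (EN N)} {r u : EN N → ℝ} {l : ℝ} (hl : 0 < l)
    (hmod : (∫ x in Ω, (|u x| / l) ^ (r x)) ≤ 1) : luxNorm Ω r u ≤ l :=
  csInf_le (lux_bddBelow Ω r u) ⟨hl, hmod⟩

lemma lux_set_nonempty {Ω : Set (EN N)} (hΩm : MeasurableSet Ω) (hfin : volume Ω < ⊤)
    {r u : EN N → ℝ} (hr : Measurable r) (hu : Measurable u) {c Cb M : ℝ}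
    (hc : 0 < c) (hM : ∀ x, |u x| ≤ M) (hM0 : 0 ≤ M)
    (hrb : ∀ x ∈ Ω, c ≤ r x ∧ r x ≤ Cb) :
    {l : ℝ | 0 < l ∧ (∫ x in Ω, (|u x| / l) ^ (r x)) ≤ 1}.Nonempty := by
  set m : ℝ := (volume Ω).toReal with hm
  have hm0 : 0 ≤ m := ENNReal.toReal_nonneg
  set z : ℝ := (m + 1) ^ (1/c) with hz
  have hz1 : 1 ≤ z := by
    rw [hz]
    calc (1:ℝ) = 1 ^ (1/c) := (Real.one_rpow _).symm
      _ ≤ (m+1) ^ (1/c) := Real.rpow_le_rpow zero_le_one (by linarith) (by positivity)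
  have hz0 : 0 < z := lt_of_lt_of_le one_pos hz1
  refine ⟨(M+1) * z, by positivity, ?_⟩
  have hpt : ∀ x ∈ Ω, (|u x| / ((M+1)*z)) ^ (r x) ≤ (m+1)⁻¹ := by
    intro x hx
    have hb1 : |u x| / ((M+1)*z) ≤ z⁻¹ := by
      rw [div_le_iff₀ (by positivity)]
      have : z⁻¹ * ((M+1)*z) = M + 1 := by field_simp
      rw [this]; linarith [hM x]
    have hzi1 : z⁻¹ ≤ 1 := by
      rw [inv_le_one_iff₀]; right; exact hz1
    calc (|u x| / ((M+1)*z)) ^ (r x) ≤ (z⁻¹) ^ (r x) :=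
          Real.rpow_le_rpow (by positivity) hb1 (le_trans hc.le (hrb x hx).1)
      _ ≤ (z⁻¹) ^ c :=
          Real.rpow_le_rpow_of_exponent_ge (by positivity) hzi1 (hrb x hx).1
      _ = (m+1)⁻¹ := by
          rw [Real.inv_rpow hz0.le, hz, ← Real.rpow_mul (by positivity), one_div,
            inv_mul_cancel₀ hc.ne', Real.rpow_one]
  have hint : IntegrableOn (fun x => (|u x| / ((M+1)*z)) ^ (r x)) Ω :=
    int_on hΩm hfin hr hu (by positivity) hM
      (fun x hx => ⟨le_trans hc.le (hrb x hx).1, (hrb x hx).2⟩)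
  calc (∫ x in Ω, (|u x| / ((M+1)*z)) ^ (r x))
      ≤ ∫ _x in Ω, (m+1)⁻¹ :=
        setIntegral_mono_on hint ((integrableOn_const_iff).mpr (Or.inr hfin)) hΩm hpt
    _ = m * (m+1)⁻¹ := by rw [setIntegral_const, smul_eq_mul, hm, measureReal_def]
    _ ≤ 1 := by
        rw [mul_inv_le_iff₀ (by positivity)]; linarith

-- pointwise key for Lemma F
lemma key_pt {t rx sx ε c δ κ : ℝ} (ht : 0 ≤ t) (hc : 0 < c) (hcr : c ≤ rx)
    (hrs : rx ≤ sx) (hse : sx ≤ rx + ε) (hδ0 : 0 < δ) (hδ1 : δ ≤ 1)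
    (hκ0 : 0 < κ) (hκ1 : κ ≤ 1) (hε : 0 ≤ ε) :
    (κ * t) ^ rx ≤ κ ^ c * (δ ^ (-ε) * t ^ sx + δ ^ c) := by
  have hrx0 : 0 < rx := lt_of_lt_of_le hc hcr
  have hδε1 : 1 ≤ δ ^ (-ε) := by
    calc (1:ℝ) = δ ^ (0:ℝ) := (Real.rpow_zero δ).symm
      _ ≤ δ ^ (-ε) := Real.rpow_le_rpow_of_exponent_ge hδ0 hδ1 (by linarith)
  have hmain : t ^ rx ≤ δ ^ (-ε) * t ^ sx + δ ^ c := by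
    rcases eq_or_lt_of_le ht with h0 | ht0
    · rw [← h0, Real.zero_rpow hrx0.ne', Real.zero_rpow (lt_of_lt_of_le hc (le_trans hcr hrs)).ne']
      positivity
    rcases le_or_gt t δ with h1 | h1
    · -- t ≤ δ ≤ 1 : t^rx ≤ t^c ≤ δ^c
      have : t ^ rx ≤ δ ^ c := by
        calc t ^ rx ≤ t ^ c := Real.rpow_le_rpow_of_exponent_ge ht0 (le_trans h1 hδ1) hcr
          _ ≤ δ ^ c := Real.rpow_le_rpow ht h1 hc.le
      nlinarith [Real.rpow_nonneg ht sx, mul_le_mul_of_nonneg_right hδε1 (Real.rpow_nonneg ht sx)]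
    rcases le_or_gt t 1 with h2 | h2
    · -- δ < t ≤ 1 : t^rx = t^sx * t^(rx-sx) ≤ δ^(-ε) t^sx
      have key : t ^ rx ≤ δ ^ (-ε) * t ^ sx := by
        have e1 : t ^ rx = t ^ sx * t ^ (rx - sx) := by
          rw [← Real.rpow_add ht0]; ring_nf
        have e2 : t ^ (rx - sx) ≤ δ ^ (rx - sx) :=
          Real.rpow_le_rpow_of_nonpos hδ0 h1.le (by linarith)
        have e3 : δ ^ (rx - sx) ≤ δ ^ (-ε) :=
          Real.rpow_le_rpow_of_exponent_ge hδ0 hδ1 (by linarith)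
        calc t ^ rx = t ^ sx * t ^ (rx - sx) := e1
          _ ≤ t ^ sx * δ ^ (-ε) := by
              exact mul_le_mul_of_nonneg_left (le_trans e2 e3) (Real.rpow_nonneg ht sx)
          _ = δ ^ (-ε) * t ^ sx := mul_comm _ _
      nlinarith [Real.rpow_pos_of_pos hδ0 c]
    · -- 1 < t : t^rx ≤ t^sx ≤ δ^(-ε) t^sx
      have key : t ^ rx ≤ δ ^ (-ε) * t ^ sx := by
        calc t ^ rx ≤ t ^ sx := Real.rpow_le_rpow_of_exponent_le h2.le hrs
          _ ≤ δ ^ (-ε) * t ^ sx := by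
              nlinarith [Real.rpow_nonneg ht sx]
      nlinarith [Real.rpow_pos_of_pos hδ0 c]
  calc (κ * t) ^ rx = κ ^ rx * t ^ rx := Real.mul_rpow hκ0.le ht
    _ ≤ κ ^ c * t ^ rx := by
        exact mul_le_mul_of_nonneg_right
          (Real.rpow_le_rpow_of_exponent_ge hκ0 hκ1 hcr) (Real.rpow_nonneg ht rx)
    _ ≤ κ ^ c * (δ ^ (-ε) * t ^ sx + δ ^ c) := by
        exact mul_le_mul_of_nonneg_left hmain (Real.rpow_nonneg hκ0.le c)

-- pointwise key for Lemma G
lemma key_pt2 {t rx sx ε c T : ℝ} (ht : 0 ≤ t) (hc : 0 < c) (hcr : c ≤ rx)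
    (hcs : c ≤ sx) (hrs : rx ≤ sx) (hse : sx ≤ rx + ε) (hT : 1 ≤ T) (htT : t ≤ T)
    (hε : 0 ≤ ε) :
    (t / T ^ (ε/c)) ^ sx ≤ t ^ rx := by
  set β : ℝ := T ^ (ε/c) with hβ
  have hT0 : (0:ℝ) < T := lt_of_lt_of_le one_pos hT
  have hβ1 : 1 ≤ β := by
    calc (1:ℝ) = T ^ (0:ℝ) := (Real.rpow_zero T).symm
      _ ≤ T ^ (ε/c) := Real.rpow_le_rpow_of_exponent_le hT (by positivity)
  have hβ0 : 0 < β := lt_of_lt_of_le one_pos hβ1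
  have hsx0 : 0 < sx := lt_of_lt_of_le hc hcs
  rcases eq_or_lt_of_le ht with h0 | ht0
  · rw [← h0, zero_div, Real.zero_rpow hsx0.ne', Real.zero_rpow (lt_of_lt_of_le hc hcr).ne']
  rcases le_or_gt t 1 with h1 | h1
  · calc (t / β) ^ sx ≤ t ^ sx :=
          Real.rpow_le_rpow (by positivity) (div_le_self ht hβ1) hsx0.le
      _ ≤ t ^ rx := Real.rpow_le_rpow_of_exponent_ge ht0 h1 hrs
  · have hβs : T ^ ε ≤ β ^ sx := by
      rw [hβ, ← Real.rpow_mul hT0.le]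
      refine Real.rpow_le_rpow_of_exponent_le hT ?_
      rw [div_mul_eq_mul_div, le_div_iff₀ hc]
      nlinarith
    have hTε : 0 < T ^ ε := Real.rpow_pos_of_pos hT0 ε
    have e1 : (t / β) ^ sx = t ^ sx / β ^ sx := Real.div_rpow ht hβ0.le _
    have e2 : t ^ sx ≤ t ^ rx * t ^ ε := by
      rw [← Real.rpow_add ht0]
      exact Real.rpow_le_rpow_of_exponent_le h1.le hse
    have e3 : t ^ ε ≤ T ^ ε := Real.rpow_le_rpow ht htT hε
    rw [e1]
    calc t ^ sx / β ^ sx ≤ t ^ sx / T ^ ε := by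
          gcongr
      _ ≤ (t ^ rx * t ^ ε) / T ^ ε := by gcongr
      _ ≤ t ^ rx := by
          rw [div_le_iff₀ hTε]
          exact mul_le_mul_of_nonneg_left e3 (Real.rpow_nonneg ht rx)

noncomputable def kap (m c ε : ℝ) : ℝ :=
  (Real.exp (Real.sqrt ε) + m * Real.exp (-(c / Real.sqrt ε))) ^ (-(1/c))

lemma kap_base_pos (m c ε : ℝ) (hm : 0 ≤ m) :
    0 < Real.exp (Real.sqrt ε) + m * Real.exp (-(c / Real.sqrt ε)) := by positivity

lemma kap_base_one_le (m c ε : ℝ) (hm : 0 ≤ m) :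
    1 ≤ Real.exp (Real.sqrt ε) + m * Real.exp (-(c / Real.sqrt ε)) := by
  have h1 : (1:ℝ) ≤ Real.exp (Real.sqrt ε) := by
    rw [← Real.exp_zero]
    exact Real.exp_le_exp.mpr (Real.sqrt_nonneg ε)
  nlinarith [Real.exp_pos (-(c / Real.sqrt ε))]

lemma kap_pos {m c ε : ℝ} (hm : 0 ≤ m) : 0 < S5.kap m c ε :=
  Real.rpow_pos_of_pos (kap_base_pos m c ε hm) _

lemma kap_le_one {m c ε : ℝ} (hm : 0 ≤ m) (hc : 0 < c) : S5.kap m c ε ≤ 1 :=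
  Real.rpow_le_one_of_one_le_of_nonpos (kap_base_one_le m c ε hm) (neg_nonpos.mpr (by positivity))

lemma kap_tendsto {m c : ℝ} (hm : 0 ≤ m) (hc : 0 < c) :
    Tendsto (fun ε => S5.kap m c ε) (𝓝[>] (0:ℝ)) (𝓝 1) := by
  have h1 : Tendsto (fun ε : ℝ => Real.sqrt ε) (𝓝[>] (0:ℝ)) (𝓝 0) :=
    (Real.continuous_sqrt.tendsto' 0 0 Real.sqrt_zero).mono_left nhdsWithin_le_nhds
  have hexp1 : Tendsto (fun ε : ℝ => Real.exp (Real.sqrt ε)) (𝓝[>] (0:ℝ)) (𝓝 1) :=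
    (Real.continuous_exp.tendsto' 0 1 Real.exp_zero).comp h1
  have h1' : Tendsto (fun ε : ℝ => Real.sqrt ε) (𝓝[>] (0:ℝ)) (𝓝[>] (0:ℝ)) := by
    rw [tendsto_nhdsWithin_iff]
    refine ⟨h1, ?_⟩
    filter_upwards [eventually_mem_nhdsWithin] with ε hε
    exact Real.sqrt_pos.mpr hε
  have hinv : Tendsto (fun ε : ℝ => (Real.sqrt ε)⁻¹) (𝓝[>] (0:ℝ)) atTop :=
    tendsto_inv_nhdsGT_zero.comp h1'
  have hdivtop : Tendsto (fun ε : ℝ => c * (Real.sqrt ε)⁻¹) (𝓝[>] (0:ℝ)) atTop :=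
    hinv.const_mul_atTop hc
  have hneg : Tendsto (fun ε : ℝ => -(c / Real.sqrt ε)) (𝓝[>] (0:ℝ)) atBot := by
    have : (fun ε : ℝ => -(c / Real.sqrt ε)) = fun ε : ℝ => -(c * (Real.sqrt ε)⁻¹) := by
      funext ε
      rw [div_eq_mul_inv]
    rw [this]
    exact tendsto_neg_atTop_atBot.comp hdivtop
  have hexp2 : Tendsto (fun ε : ℝ => Real.exp (-(c / Real.sqrt ε))) (𝓝[>] (0:ℝ)) (𝓝 0) :=
    Real.tendsto_exp_atBot.comp hneg
  have hBt : Tendsto (fun ε : ℝ => Real.exp (Real.sqrt ε)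
      + m * Real.exp (-(c / Real.sqrt ε))) (𝓝[>] (0:ℝ)) (𝓝 1) := by
    have := hexp1.add (hexp2.const_mul m)
    simpa using this
  have hrpow : Tendsto (fun x : ℝ => x ^ (-(1/c))) (𝓝 1) (𝓝 1) := by
    have := (Real.continuousAt_rpow_const 1 (-(1/c)) (Or.inl one_ne_zero)).tendsto
    rwa [Real.one_rpow] at this
  exact hrpow.comp hBt

/-- Lemma G : fixed-function upper comparison. -/
lemma lux_le_beta {Ω : Set (EN N)} (hΩm : MeasurableSet Ω) (hfin : volume Ω < ⊤)
    {r s u : EN N → ℝ} (hr : Measurable r) (hs : Measurable s) (hu : Measurable u)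
    {c Cb M ε lam : ℝ} (hc : 0 < c) (hM : ∀ x, |u x| ≤ M)
    (hrb : ∀ x ∈ Ω, c ≤ r x ∧ r x ≤ Cb) (hsb : ∀ x ∈ Ω, c ≤ s x ∧ s x ≤ Cb)
    (hrs : ∀ x ∈ Ω, r x ≤ s x ∧ s x ≤ r x + ε) (hε : 0 ≤ ε)
    (hlam : 0 < lam) (hmod : (∫ x in Ω, (|u x| / lam) ^ (r x)) ≤ 1) :
    luxNorm Ω s u ≤ (max 1 (M/lam)) ^ (ε/c) * lam := by
  set T : ℝ := max 1 (M/lam) with hT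
  have hT1 : 1 ≤ T := le_max_left _ _
  have hβ0 : 0 < T ^ (ε/c) := Real.rpow_pos_of_pos (by linarith) _
  refine lux_le (by positivity) ?_
  have hpt : ∀ x ∈ Ω, (|u x| / (T ^ (ε/c) * lam)) ^ (s x) ≤ (|u x| / lam) ^ (r x) := by
    intro x hx
    have he : |u x| / (T ^ (ε/c) * lam) = (|u x| / lam) / T ^ (ε/c) := by
      rw [div_div]; ring_nf
    rw [he]
    refine key_pt2 (by positivity) hc (hrb x hx).1 (hsb x hx).1 (hrs x hx).1 (hrs x hx).2
      hT1 ?_ hε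
    calc |u x| / lam ≤ M / lam := by gcongr; exact hM x
      _ ≤ T := le_max_right _ _
  calc (∫ x in Ω, (|u x| / (T ^ (ε/c) * lam)) ^ (s x))
      ≤ ∫ x in Ω, (|u x| / lam) ^ (r x) := by
        refine setIntegral_mono_on ?_ ?_ hΩm hpt
        · exact int_on hΩm hfin hs hu (by positivity) hM
            (fun x hx => ⟨le_trans hc.le (hsb x hx).1, (hsb x hx).2⟩)
        · exact int_on hΩm hfin hr hu hlam hM
            (fun x hx => ⟨le_trans hc.le (hrb x hx).1, (hrb x hx).2⟩)
    _ ≤ 1 := hmod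

/-- Lemma E : uniform positive lower bound on Luxemburg norms of a fixed nonzero
continuous function. -/
lemma lux_lower {Ω : Set (EN N)} (hΩo : IsOpen Ω) (hfin : volume Ω < ⊤)
    {v : EN N → ℝ} (hv : Continuous v) {M : ℝ} (hM : ∀ x, |v x| ≤ M) (hM0 : 0 ≤ M)
    {x0 : EN N} (hx0 : x0 ∈ Ω) (hvx0 : v x0 ≠ 0) {c Cb : ℝ} (hc : 0 < c) :
    ∃ lam0 : ℝ, 0 < lam0 ∧ ∀ r : EN N → ℝ, Measurable r →
      (∀ x ∈ Ω, c ≤ r x ∧ r x ≤ Cb) → lam0 ≤ luxNorm Ω r v := by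
  have hΩm : MeasurableSet Ω := hΩo.measurableSet
  set δ : ℝ := |v x0| / 2 with hδdef
  have hδ0 : 0 < δ := by
    have := abs_pos.mpr hvx0
    rw [hδdef]; linarith
  set b : Set (EN N) := Ω ∩ {x | δ < |v x|} with hbdef
  have hbo : IsOpen b := hΩo.inter (isOpen_lt continuous_const hv.abs)
  have hbne : b.Nonempty := ⟨x0, hx0, by simp only [mem_setOf_eq]; rw [hδdef]; linarith [abs_pos.mpr hvx0]⟩
  set μ : ℝ := (volume b).toReal with hμdef
  have hμ0 : 0 < μ := ENNReal.toReal_pos (hbo.measure_pos volume hbne).ne'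
    (lt_of_le_of_lt (measure_mono inter_subset_left) hfin).ne
  set z : ℝ := min 1 (μ/2) with hzdef
  have hz0 : 0 < z := lt_min one_pos (by linarith)
  have hz1 : z ≤ 1 := min_le_left _ _
  have hzc1 : z ^ (1/c) ≤ 1 := by
    calc z ^ (1/c) ≤ 1 ^ (1/c) := Real.rpow_le_rpow hz0.le hz1 (by positivity)
      _ = 1 := Real.one_rpow _
  have hzc0 : 0 < z ^ (1/c) := Real.rpow_pos_of_pos hz0 _
  refine ⟨δ * z ^ (1/c), by positivity, fun r hr hrb => ?_⟩
  have hne := lux_set_nonempty hΩm hfin hr hv.measurable hc hM hM0 hrb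
  refine le_csInf hne ?_
  rintro l ⟨hl0, hmod⟩
  by_contra hcon
  push_neg at hcon
  -- l < δ * z^(1/c); derive 2 ≤ modular ≤ 1
  have hint : IntegrableOn (fun x => (|v x| / l) ^ (r x)) Ω :=
    int_on hΩm hfin hr hv.measurable hl0 hM
      (fun x hx => ⟨le_trans hc.le (hrb x hx).1, (hrb x hx).2⟩)
  have hconst : (δ / (δ * z ^ (1/c))) ^ c = z⁻¹ := by
    have : δ / (δ * z ^ (1/c)) = (z ^ (1/c))⁻¹ := by field_simp
    rw [this, Real.inv_rpow hzc0.le, ← Real.rpow_mul hz0.le, one_div,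
      inv_mul_cancel₀ hc.ne', Real.rpow_one]
  have h1le : (1:ℝ) ≤ δ / l := by
    rw [le_div_iff₀ hl0]
    calc 1 * l = l := one_mul l
      _ ≤ δ * z ^ (1/c) := hcon.le
      _ ≤ δ * 1 := by gcongr
      _ = δ := mul_one δ
  have hpt : ∀ x ∈ b, (δ / (δ * z ^ (1/c))) ^ c ≤ (|v x| / l) ^ (r x) := by
    intro x hx
    calc (δ / (δ * z ^ (1/c))) ^ c ≤ (δ / l) ^ c := by
          refine Real.rpow_le_rpow (by positivity) ?_ hc.le
          gcongr
      _ ≤ (δ / l) ^ (r x) :=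
          Real.rpow_le_rpow_of_exponent_le h1le (hrb x hx.1).1
      _ ≤ (|v x| / l) ^ (r x) := by
          refine Real.rpow_le_rpow (by positivity) ?_
            (le_trans hc.le (hrb x hx.1).1)
          gcongr
          exact le_of_lt hx.2
  have h2 : 2 ≤ ∫ x in Ω, (|v x| / l) ^ (r x) := by
    have hμb : volume b < ⊤ := lt_of_le_of_lt (measure_mono inter_subset_left) hfin
    calc (2:ℝ) ≤ μ * z⁻¹ := by
          have hz2 : z ≤ μ/2 := min_le_right _ _
          have h2z : (μ/2)⁻¹ ≤ z⁻¹ := inv_anti₀ hz0 hz2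
          have hμμ : μ * (μ/2)⁻¹ = 2 := by field_simp
          nlinarith [mul_le_mul_of_nonneg_left h2z hμ0.le]
      _ = μ * (δ / (δ * z ^ (1/c))) ^ c := by rw [hconst]
      _ = ∫ _x in b, (δ / (δ * z ^ (1/c))) ^ c := by
          rw [setIntegral_const, smul_eq_mul, hμdef, measureReal_def]
      _ ≤ ∫ x in b, (|v x| / l) ^ (r x) := by
          refine setIntegral_mono_on ((integrableOn_const_iff).mpr (Or.inr hμb))
            (hint.mono_set inter_subset_left) hbo.measurableSet hpt
      _ ≤ ∫ x in Ω, (|v x| / l) ^ (r x) := by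
          refine setIntegral_mono_set hint ?_ (HasSubset.Subset.eventuallyLE inter_subset_left)
          filter_upwards with x
          positivity
  linarith

/-- Lemma F : uniform lower comparison with constant `kap`. -/
lemma kap_mul_lux_le {Ω : Set (EN N)} (hΩm : MeasurableSet Ω) (hfin : volume Ω < ⊤)
    {r s u : EN N → ℝ} (hr : Measurable r) (hs : Measurable s) (hu : Measurable u)
    {c Cb M ε : ℝ} (hc : 0 < c) (hM : ∀ x, |u x| ≤ M) (hM0 : 0 ≤ M)
    (hrb : ∀ x ∈ Ω, c ≤ r x ∧ r x ≤ Cb) (hsb : ∀ x ∈ Ω, c ≤ s x ∧ s x ≤ Cb)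
    (hrs : ∀ x ∈ Ω, r x ≤ s x ∧ s x ≤ r x + ε) (hε : 0 < ε) :
    kap (volume Ω).toReal c ε * luxNorm Ω r u ≤ luxNorm Ω s u := by
  set m : ℝ := (volume Ω).toReal with hm
  have hm0 : 0 ≤ m := ENNReal.toReal_nonneg
  set κ : ℝ := S5.kap m c ε with hκ
  have hκ0 : 0 < κ := kap_pos hm0
  have hκ1 : κ ≤ 1 := kap_le_one hm0 hc
  have hsq0 : 0 < Real.sqrt ε := Real.sqrt_pos.mpr hε
  set sq : ℝ := Real.sqrt ε with hsq
  set δ : ℝ := Real.exp (-(1/sq)) with hδ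
  have hδ0 : 0 < δ := Real.exp_pos _
  have hδ1 : δ ≤ 1 := by
    rw [hδ, Real.exp_le_one_iff]
    rw [neg_nonpos]
    positivity
  have hpow : ∀ bexp : ℝ, δ ^ bexp = Real.exp (-(1/sq) * bexp) := fun bexp => by
    rw [hδ, Real.rpow_def_of_pos (Real.exp_pos _), Real.log_exp]
  have hδε : δ ^ (-ε) = Real.exp sq := by
    rw [hpow]
    congr 1
    have hss : sq * sq = ε := Real.mul_self_sqrt hε.le
    field_simp
    linarith
  have hδc : δ ^ c = Real.exp (-(c/sq)) := by
    rw [hpow]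
    congr 1
    ring
  set B : ℝ := Real.exp sq + m * Real.exp (-(c/sq)) with hB
  have hB1 : (1:ℝ) ≤ B := kap_base_one_le m c ε hm0
  have hB0 : (0:ℝ) < B := lt_of_lt_of_le one_pos hB1
  have hκc : κ ^ c * B = 1 := by
    have hpowc : κ ^ c = B⁻¹ := by
      rw [hκ, kap, ← hsq, ← hB, ← Real.rpow_mul hB0.le, neg_mul, one_div,
        inv_mul_cancel₀ hc.ne', Real.rpow_neg_one]
    rw [hpowc, inv_mul_cancel₀ hB0.ne']
  have main : ∀ bnd : ℝ, luxNorm Ω s u < bnd → κ * luxNorm Ω r u ≤ bnd := by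
    intro bnd hbnd
    have hne := lux_set_nonempty hΩm hfin hs hu hc hM hM0 hsb
    obtain ⟨l, ⟨hl0, hmods⟩, hlb⟩ := (csInf_lt_iff (lux_bddBelow Ω s u) hne).mp hbnd
    have hint_s : IntegrableOn (fun x => (|u x|/l)^(s x)) Ω :=
      int_on hΩm hfin hs hu hl0 hM
        (fun x hx => ⟨le_trans hc.le (hsb x hx).1, (hsb x hx).2⟩)
    have hlux : luxNorm Ω r u ≤ l / κ := by
      refine lux_le (by positivity) ?_
      have hpt : ∀ x ∈ Ω, (|u x| / (l/κ)) ^ (r x)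
          ≤ κ^c * (δ^(-ε) * (|u x|/l)^(s x) + δ^c) := by
        intro x hx
        have he : |u x| / (l/κ) = κ * (|u x| / l) := by
          field_simp
        rw [he]
        exact key_pt (by positivity) hc (hrb x hx).1 (hrs x hx).1 (hrs x hx).2
          hδ0 hδ1 hκ0 hκ1 hε.le
      calc (∫ x in Ω, (|u x| / (l/κ)) ^ (r x))
          ≤ ∫ x in Ω, κ^c * (δ^(-ε) * (|u x|/l)^(s x) + δ^c) := by
            refine setIntegral_mono_on ?_ ?_ hΩm hpt
            · exact int_on hΩm hfin hr hu (by positivity) hM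
                (fun x hx => ⟨le_trans hc.le (hrb x hx).1, (hrb x hx).2⟩)
            · exact (((hint_s.const_mul _).add
                ((integrableOn_const_iff).mpr (Or.inr hfin))).const_mul _)
        _ = κ^c * (δ^(-ε) * (∫ x in Ω, (|u x|/l)^(s x)) + m * δ^c) := by
            rw [integral_const_mul, integral_add (hint_s.const_mul _)
              ((integrableOn_const_iff).mpr (Or.inr hfin)), integral_const_mul,
              setIntegral_const, smul_eq_mul, measureReal_def, ← hm]
        _ ≤ κ^c * (δ^(-ε) * 1 + m * δ^c) := by
            gcongr
        _ = κ^c * B := by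
            rw [hδε, hδc, hB]
            ring
        _ = 1 := hκc
    calc κ * luxNorm Ω r u ≤ κ * (l / κ) :=
          mul_le_mul_of_nonneg_left hlux hκ0.le
      _ = l := by field_simp
      _ ≤ bnd := hlb.le
  by_contra hcon
  push_neg at hcon
  have h2 := main ((luxNorm Ω s u + κ * luxNorm Ω r u)/2) (by linarith)
  linarith

lemma exists_test {Ω : Set (EN N)} (hΩo : IsOpen Ω) (hΩne : Ω.Nonempty) :
    ∃ v : EN N → ℝ, TestFn Ω v ∧ v ≠ 0 := by
  obtain ⟨x0, hx0⟩ := hΩne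
  obtain ⟨ρ, hρ0, hρ⟩ := Metric.isOpen_iff.mp hΩo x0 hx0
  have hf : ∃ f : ContDiffBump x0, f.rOut = ρ/2 := ⟨⟨ρ/4, ρ/2, by positivity, by linarith⟩, rfl⟩
  obtain ⟨f, hfr⟩ := hf
  refine ⟨f, ⟨f.contDiff, f.hasCompactSupport, ?_⟩, ?_⟩
  · rw [f.tsupport_eq, hfr]
    exact subset_trans (closedBall_subset_ball (by linarith)) hρ
  · intro h
    have h1 : f x0 = 1 :=
      f.one_of_mem_closedBall (mem_closedBall_self (le_of_lt f.rIn_pos))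
    rw [h] at h1
    simp at h1

lemma sob_bddBelow (p q : EN N → ℝ) (Ω : Set (EN N)) :
    BddBelow {c : ℝ | ∃ v : EN N → ℝ, TestFn Ω v ∧ v ≠ 0 ∧
      c = luxNorm Ω p (grad v) / luxNorm Ω q v} := by
  refine ⟨0, fun a ha => ?_⟩
  obtain ⟨v, _, _, rfl⟩ := ha
  exact div_nonneg (lux_nonneg _ _ _) (lux_nonneg _ _ _)

lemma sob_nonneg (p q : EN N → ℝ) (Ω : Set (EN N)) : 0 ≤ sobolevConst p q Ω := by
  refine Real.sInf_nonneg fun a ha => ?_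
  obtain ⟨v, _, _, rfl⟩ := ha
  exact div_nonneg (lux_nonneg _ _ _) (lux_nonneg _ _ _)


lemma test_facts {Ω : Set (EN N)} {v : EN N → ℝ} (hT : TestFn Ω v) (hne : v ≠ 0) :
    Continuous v ∧ Continuous (grad v) ∧
    (∃ Mv : ℝ, (∀ x, |v x| ≤ Mv) ∧ 0 ≤ Mv) ∧
    (∃ Mg : ℝ, (∀ x, |grad v x| ≤ Mg) ∧ 0 ≤ Mg) ∧ (∃ x0 ∈ Ω, v x0 ≠ 0) := by
  have hvc : Continuous v := hT.1.continuous
  have h1n : (1 : WithTop ℕ∞) ≤ ((⊤ : ℕ∞) : WithTop ℕ∞) := by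
    exact_mod_cast le_top
  have hgc : Continuous (grad v) := (hT.1.continuous_fderiv (by simp)).norm
  obtain ⟨C0, hC0⟩ := hT.2.1.exists_bound_of_continuous hvc
  obtain ⟨C1, hC1⟩ := ((hT.2.1.fderiv (𝕜 := ℝ)).norm).exists_bound_of_continuous hgc
  have hx0 : ∃ x0, v x0 ≠ 0 := by
    by_contra h
    push_neg at h
    exact hne (funext fun x => h x)
  obtain ⟨x0, hx0⟩ := hx0
  refine ⟨hvc, hgc, ⟨max C0 0, fun x => ?_, le_max_right _ _⟩,
    ⟨max C1 0, fun x => ?_, le_max_right _ _⟩, x0, ?_, hx0⟩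
  · exact le_trans (le_of_eq (Real.norm_eq_abs (v x)).symm) (le_max_of_le_left (hC0 x))
  · exact le_trans (le_of_eq (Real.norm_eq_abs (grad v x)).symm) (le_max_of_le_left (hC1 x))
  · exact hT.2.2 (subset_tsupport _ hx0)

lemma sob_lower {Ω : Set (EN N)} (hΩo : IsOpen Ω) (hΩne : Ω.Nonempty)
    (hfin : volume Ω < ⊤)
    {p q P Q : EN N → ℝ} (hpm : Measurable p) (hqm : Measurable q)
    (hPm : Measurable P) (hQm : Measurable Q)
    {c Cb ε : ℝ} (hc : 0 < c)
    (hpb : ∀ x ∈ Ω, c ≤ p x ∧ p x ≤ Cb) (hqb : ∀ x ∈ Ω, c ≤ q x ∧ q x ≤ Cb)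
    (hPb : ∀ x ∈ Ω, c ≤ P x ∧ P x ≤ Cb) (hQb : ∀ x ∈ Ω, c ≤ Q x ∧ Q x ≤ Cb)
    (hP : ∀ x ∈ Ω, p x ≤ P x ∧ P x ≤ p x + ε)
    (hQ : ∀ x ∈ Ω, Q x ≤ q x ∧ q x ≤ Q x + ε) (hε : 0 < ε) :
    kap (volume Ω).toReal c ε * (kap (volume Ω).toReal c ε * sobolevConst p q Ω)
      ≤ sobolevConst P Q Ω := by
  have hΩm : MeasurableSet Ω := hΩo.measurableSet
  have hm0 : (0:ℝ) ≤ (volume Ω).toReal := ENNReal.toReal_nonneg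
  set κ : ℝ := kap (volume Ω).toReal c ε with hκ
  have hκ0 : 0 < κ := kap_pos hm0
  have hκ1 : κ ≤ 1 := kap_le_one hm0 hc
  obtain ⟨w, hw, hwne⟩ := exists_test hΩo hΩne
  refine le_csInf ⟨_, w, hw, hwne, rfl⟩ ?_
  rintro a ⟨v, hT, hvne, rfl⟩
  obtain ⟨hvc, hgc, ⟨Mv, hMv, hMv0⟩, ⟨Mg, hMg, hMg0⟩, x0, hx0, hvx0⟩ := test_facts hT hvne
  obtain ⟨lam0, hlam0, hlow⟩ := lux_lower hΩo hfin hvc hMv hMv0 hx0 hvx0 hc (Cb := Cb)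
  have hDq : 0 < luxNorm Ω q v := lt_of_lt_of_le hlam0 (hlow q hqm hqb)
  have hDQ : 0 < luxNorm Ω Q v := lt_of_lt_of_le hlam0 (hlow Q hQm hQb)
  have F1 : κ * luxNorm Ω p (grad v) ≤ luxNorm Ω P (grad v) :=
    kap_mul_lux_le hΩm hfin hpm hPm hgc.measurable hc hMg hMg0 hpb hPb hP hε
  have F2 : κ * luxNorm Ω Q v ≤ luxNorm Ω q v :=
    kap_mul_lux_le hΩm hfin hQm hqm hvc.measurable hc hMv hMv0 hQb hqb hQ hε
  have hS : sobolevConst p q Ω ≤ luxNorm Ω p (grad v) / luxNorm Ω q v :=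
    csInf_le (sob_bddBelow p q Ω) ⟨v, hT, hvne, rfl⟩
  have hNp0 : 0 ≤ luxNorm Ω p (grad v) := lux_nonneg _ _ _
  calc κ * (κ * sobolevConst p q Ω)
      ≤ κ * (κ * (luxNorm Ω p (grad v) / luxNorm Ω q v)) := by
        gcongr
    _ = (κ * luxNorm Ω p (grad v)) / (luxNorm Ω q v / κ) := by
        field_simp
    _ ≤ luxNorm Ω P (grad v) / luxNorm Ω Q v := by
        refine div_le_div₀ (lux_nonneg _ _ _) F1 hDQ ?_
        rw [le_div_iff₀ hκ0]
        calc luxNorm Ω Q v * κ = κ * luxNorm Ω Q v := mul_comm _ _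
          _ ≤ luxNorm Ω q v := F2

end S5
/-- continuity of the Sobolev constant for monotone uniform convergence of
the exponents. -/
theorem stmt5 {N : ℕ} (hN : 2 ≤ N) (Ω : Set (EN N)) (hΩo : IsOpen Ω)
    (hΩne : Ω.Nonempty) (hΩb : Bornology.IsBounded Ω)
    (p q : EN N → ℝ) (pn qn : ℕ → EN N → ℝ)
    (hpm : Measurable p) (hqm : Measurable q)
    (hpnm : ∀ n, Measurable (pn n)) (hqnm : ∀ n, Measurable (qn n))
    (c C : ℝ) (hc : 1 < c)
    (hpb : ∀ x ∈ Ω, c ≤ p x ∧ p x ≤ C)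
    (hqb : ∀ x ∈ Ω, c ≤ q x ∧ q x ≤ C)
    (hbn : ∀ n, ∀ x ∈ Ω, c ≤ pn n x ∧ pn n x ≤ C ∧ c ≤ qn n x ∧ qn n x ≤ C)
    (hp : TendstoUniformlyOn (fun n x => pn n x) p atTop Ω)
    (hq : TendstoUniformlyOn (fun n x => qn n x) q atTop Ω)
    (hpmono : ∀ n, ∀ x ∈ Ω, p x ≤ pn n x)
    (hqmono : ∀ n, ∀ x ∈ Ω, qn n x ≤ q x) :
    Tendsto (fun n => sobolevConst (pn n) (qn n) Ω) atTop (nhds (sobolevConst p q Ω)) := by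
  classical
  have hΩm : MeasurableSet Ω := hΩo.measurableSet
  have hfin : volume Ω < ⊤ := hΩb.measure_lt_top
  set m : ℝ := (volume Ω).toReal with hm
  have hm0 : 0 ≤ m := ENNReal.toReal_nonneg
  have hc0 : (0:ℝ) < c := by linarith
  set S : ℝ := sobolevConst p q Ω with hS
  have hS0 : 0 ≤ S := S5.sob_nonneg p q Ω
  rw [Metric.tendsto_atTop]
  intro η hη
  have hAne : {a : ℝ | ∃ v : EN N → ℝ, TestFn Ω v ∧ v ≠ 0 ∧
      a = luxNorm Ω p (grad v) / luxNorm Ω q v}.Nonempty := by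
    obtain ⟨w, hw, hwne⟩ := S5.exists_test hΩo hΩne
    exact ⟨_, w, hw, hwne, rfl⟩
  have hSlt : S < S + η/4 := by linarith
  obtain ⟨a, ⟨v, hT, hvne, rfl⟩, hav⟩ :=
    (csInf_lt_iff (S5.sob_bddBelow p q Ω) hAne).mp hSlt
  obtain ⟨hvc, hgc, ⟨Mv, hMv, hMv0⟩, ⟨Mg, hMg, hMg0⟩, x0, hx0, hvx0⟩ :=
    S5.test_facts hT hvne
  obtain ⟨lam0, hlam0, hlow⟩ := S5.lux_lower hΩo hfin hvc hMv hMv0 hx0 hvx0 hc0 (Cb := C)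
  set Dq : ℝ := luxNorm Ω q v with hDqd
  have hDq : lam0 ≤ Dq := hlow q hqm hqb
  have hDq0 : 0 < Dq := lt_of_lt_of_le hlam0 hDq
  set Np : ℝ := luxNorm Ω p (grad v) with hNpd
  have hlune := S5.lux_set_nonempty hΩm hfin hpm hgc.measurable hc0 hMg hMg0 hpb
  have hNplt : Np < Np + lam0 * η / 4 := by
    have : 0 < lam0 * η / 4 := by positivity
    linarith
  obtain ⟨lam, ⟨hlam', hlammod⟩, hlamlt⟩ :=
    (csInf_lt_iff (S5.lux_bddBelow Ω p (grad v)) hlune).mp hNplt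
  set T1 : ℝ := max 1 (Mg / lam) with hT1d
  set T2 : ℝ := max 1 (Mv / lam0) with hT2d
  have hT1 : (1:ℝ) ≤ T1 := le_max_left _ _
  have hT2 : (1:ℝ) ≤ T2 := le_max_left _ _
  have hT10 : (0:ℝ) < T1 := lt_of_lt_of_le one_pos hT1
  have hT20 : (0:ℝ) < T2 := lt_of_lt_of_le one_pos hT2
  have hratio : lam / Dq ≤ S + η/2 := by
    have h1 : lam / Dq ≤ (Np + lam0 * η / 4) / Dq := by gcongr
    have h2 : (Np + lam0 * η / 4) / Dq = Np / Dq + (lam0 * η / 4) / Dq := add_div _ _ _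
    have h3 : (lam0 * η / 4) / Dq ≤ (lam0 * η / 4) / lam0 := by
      gcongr
    have h4 : (lam0 * η / 4) / lam0 = η / 4 := by field_simp
    have h5 : Np / Dq < S + η/4 := hav
    linarith
  -- limits in ε
  have hconst_rpow : ∀ T : ℝ, 1 ≤ T →
      Tendsto (fun ε : ℝ => T ^ (ε / c)) (𝓝[>] (0:ℝ)) (𝓝 1) := by
    intro T hTo
    have hdiv : Tendsto (fun ε : ℝ => ε / c) (𝓝 (0:ℝ)) (𝓝 0) := by
      have := (continuous_id.div_const c).tendsto (0:ℝ)
      simpa using this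
    have hcr : Tendsto (fun y : ℝ => T ^ y) (𝓝 (0:ℝ)) (𝓝 1) := by
      have h := (Real.continuousAt_const_rpow
        (show T ≠ 0 by linarith) (b := (0:ℝ))).tendsto
      rwa [Real.rpow_zero] at h
    exact (hcr.comp hdiv).mono_left nhdsWithin_le_nhds
  have hg : Tendsto (fun ε : ℝ => T1 ^ (ε/c) * (T2 ^ (ε/c) * (lam / Dq)))
      (𝓝[>] (0:ℝ)) (𝓝 (lam / Dq)) := by
    have := (hconst_rpow T1 hT1).mul
      ((hconst_rpow T2 hT2).mul (tendsto_const_nhds (x := lam / Dq)))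
    simpa using this
  have hκt : Tendsto (fun ε : ℝ => S5.kap m c ε * (S5.kap m c ε * S)) (𝓝[>] (0:ℝ)) (𝓝 S) := by
    have := (S5.kap_tendsto hm0 hc0).mul
      ((S5.kap_tendsto hm0 hc0).mul (tendsto_const_nhds (x := S)))
    simpa using this
  have hev1 : ∀ᶠ ε in 𝓝[>] (0:ℝ),
      T1 ^ (ε/c) * (T2 ^ (ε/c) * (lam / Dq)) < S + 3*η/4 :=
    hg.eventually_lt_const (by linarith)
  have hev2 : ∀ᶠ ε in 𝓝[>] (0:ℝ), S - η/2 < S5.kap m c ε * (S5.kap m c ε * S) :=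
    hκt.eventually_const_lt (by linarith)
  obtain ⟨ε, ⟨hεg, hεκ⟩, hε0'⟩ := ((hev1.and hev2).and eventually_mem_nhdsWithin).exists
  have hε0 : 0 < ε := hε0'
  have hpu := Metric.tendstoUniformlyOn_iff.mp hp ε hε0
  have hqu := Metric.tendstoUniformlyOn_iff.mp hq ε hε0
  obtain ⟨n0, hn0⟩ := eventually_atTop.mp (hpu.and hqu)
  refine ⟨n0, fun n hn => ?_⟩
  obtain ⟨hpn, hqn⟩ := hn0 n hn
  have hPs : ∀ x ∈ Ω, p x ≤ pn n x ∧ pn n x ≤ p x + ε := by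
    intro x hx
    refine ⟨hpmono n x hx, ?_⟩
    have h := hpn x hx
    rw [Real.dist_eq] at h
    have := abs_lt.mp h
    linarith [this.1]
  have hQs : ∀ x ∈ Ω, qn n x ≤ q x ∧ q x ≤ qn n x + ε := by
    intro x hx
    refine ⟨hqmono n x hx, ?_⟩
    have h := hqn x hx
    rw [Real.dist_eq] at h
    have := abs_lt.mp h
    linarith [this.2]
  have hPb : ∀ x ∈ Ω, c ≤ pn n x ∧ pn n x ≤ C := fun x hx =>
    ⟨(hbn n x hx).1, (hbn n x hx).2.1⟩
  have hQb : ∀ x ∈ Ω, c ≤ qn n x ∧ qn n x ≤ C := fun x hx =>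
    ⟨(hbn n x hx).2.2.1, (hbn n x hx).2.2.2⟩
  set Sn : ℝ := sobolevConst (pn n) (qn n) Ω with hSnd
  have hlower : S - η/2 < Sn :=
    lt_of_lt_of_le hεκ (S5.sob_lower hΩo hΩne hfin hpm hqm (hpnm n) (hqnm n)
      hc0 hpb hqb hPb hQb hPs hQs hε0)
  -- upper bound
  have hDQn : Dq / T2 ^ (ε/c) ≤ luxNorm Ω (qn n) v := by
    refine le_csInf (S5.lux_set_nonempty hΩm hfin (hqnm n) hvc.measurable hc0
      hMv hMv0 hQb) ?_
    rintro l ⟨hl0, hlmod⟩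
    have hll : lam0 ≤ l :=
      le_trans (hlow (qn n) (hqnm n) hQb)
        (csInf_le (S5.lux_bddBelow Ω (qn n) v) ⟨hl0, hlmod⟩)
    have hG : luxNorm Ω q v ≤ (max 1 (Mv / l)) ^ (ε/c) * l :=
      S5.lux_le_beta hΩm hfin (hqnm n) hqm hvc.measurable hc0 hMv hQb hqb hQs
        hε0.le hl0 hlmod
    have hmax : max 1 (Mv / l) ≤ T2 := by
      refine max_le_max le_rfl ?_
      gcongr
    have hDqT : Dq ≤ T2 ^ (ε/c) * l := by
      refine le_trans hG ?_
      exact mul_le_mul_of_nonneg_right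
        (Real.rpow_le_rpow (by positivity) hmax (by positivity)) hl0.le
    rw [div_le_iff₀ (by positivity : (0:ℝ) < T2 ^ (ε/c))]
    linarith [hDqT, mul_comm (T2 ^ (ε/c)) l]
  have hNPn : luxNorm Ω (pn n) (grad v) ≤ T1 ^ (ε/c) * lam :=
    S5.lux_le_beta hΩm hfin hpm (hpnm n) hgc.measurable hc0 hMg hpb hPb hPs
      hε0.le hlam' hlammod
  have hSn_le : Sn ≤ luxNorm Ω (pn n) (grad v) / luxNorm Ω (qn n) v :=
    csInf_le (S5.sob_bddBelow (pn n) (qn n) Ω) ⟨v, hT, hvne, rfl⟩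
  have hDQn0 : (0:ℝ) < Dq / T2 ^ (ε/c) := by positivity
  have hupper : Sn < S + η := by
    have h6 : luxNorm Ω (pn n) (grad v) / luxNorm Ω (qn n) v
        ≤ (T1 ^ (ε/c) * lam) / (Dq / T2 ^ (ε/c)) :=
      div_le_div₀ (by positivity) hNPn hDQn0 hDQn
    have h7 : (T1 ^ (ε/c) * lam) / (Dq / T2 ^ (ε/c))
        = T1 ^ (ε/c) * (T2 ^ (ε/c) * (lam / Dq)) := by
      field_simp
    calc Sn ≤ luxNorm Ω (pn n) (grad v) / luxNorm Ω (qn n) v := hSn_le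
      _ ≤ (T1 ^ (ε/c) * lam) / (Dq / T2 ^ (ε/c)) := h6
      _ = T1 ^ (ε/c) * (T2 ^ (ε/c) * (lam / Dq)) := h7
      _ < S + 3*η/4 := hεg
      _ ≤ S + η := by linarith
  rw [Real.dist_eq, abs_lt]
  exact ⟨by linarith, by linarith⟩
end
end

section
/- Let p_n : Ω → ℝ be measurable exponents with p ≤ p_n ≤ C pointwise on Ω for all n and ‖p_n − p‖_{L^∞(Ω)} → 0. Then for every δ > 0 there exists n₀ such that for all n ≥ n₀ and ALL u ∈ C_c^∞(Ω) simultaneously: ‖|∇u|‖_{L^{p(·)}(Ω)} ≤ (1+δ)·‖|∇u|‖_{L^{p_n(·)}(Ω)} (the error is uniform in u). -/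
open MeasureTheory Metric Set Filter Topology

noncomputable section

lemma aux_pt (c δ θ ε a s pp qq : ℝ) (hδ : 0 < δ) (hc : 0 < c)
    (ha : a = ((1+δ)^c)⁻¹) (hθ0 : 0 < θ) (hθ1 : θ ≤ 1)
    (hs : 0 ≤ s) (hcp : c ≤ pp) (hpq : pp ≤ qq) (hqp : qq - pp ≤ ε) :
    (s / (1+δ)) ^ pp ≤ θ ^ c + (1/θ)^ε * a * s ^ qq := by
  have h1δ : (0:ℝ) < 1 + δ := by linarith
  have hA1 : (1:ℝ) ≤ (1+δ)^c := Real.one_le_rpow (by linarith) hc.le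
  have ha0 : 0 ≤ a := by rw [ha]; positivity
  set t : ℝ := s / (1+δ) with htdef
  have ht0 : 0 ≤ t := div_nonneg hs h1δ.le
  have hsq : 0 ≤ s ^ qq := Real.rpow_nonneg hs qq
  have hinv : 0 ≤ (1/θ)^ε := Real.rpow_nonneg (by positivity) ε
  rcases le_or_gt t θ with h | h
  · have h1 : t ^ pp ≤ θ ^ c :=
      le_trans (Real.rpow_le_rpow ht0 h (by linarith))
        (Real.rpow_le_rpow_of_exponent_ge hθ0 hθ1 hcp)
    nlinarith [mul_nonneg (mul_nonneg hinv ha0) hsq]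
  · have ht0' : 0 < t := lt_trans hθ0 h
    have hsplit : t ^ pp = t ^ qq * t ^ (pp - qq) := by
      rw [← Real.rpow_add ht0']; congr 1; ring
    have h2 : t ^ (pp - qq) ≤ (1/θ)^ε := by
      have h21 : t ^ (pp - qq) ≤ θ ^ (pp - qq) :=
        Real.rpow_le_rpow_of_nonpos hθ0 h.le (by linarith)
      have h22 : θ ^ (pp - qq) ≤ θ ^ (-ε) :=
        Real.rpow_le_rpow_of_exponent_ge hθ0 hθ1 (by linarith)
      have h23 : θ ^ (-ε) = (1/θ)^ε := by
        rw [Real.rpow_neg hθ0.le, one_div, Real.inv_rpow hθ0.le]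
      linarith [h21, h22, h23.ge]
    have h3 : t ^ qq ≤ a * s ^ qq := by
      rw [htdef, Real.div_rpow hs h1δ.le, ha]
      rw [div_eq_mul_inv, mul_comm]
      refine mul_le_mul_of_nonneg_right ?_ hsq
      exact inv_anti₀ (by linarith) (Real.rpow_le_rpow_of_exponent_le (by linarith) (by linarith))
    have hθc : 0 ≤ θ ^ c := Real.rpow_nonneg hθ0.le c
    have h4 : t ^ qq * t ^ (pp - qq) ≤ (a * s ^ qq) * ((1/θ)^ε) :=
      mul_le_mul h3 h2 (Real.rpow_nonneg ht0 _) (by positivity)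
    nlinarith [h4, hsplit]

lemma aux_pow_le_self (b e : ℝ) (hb0 : 0 ≤ b) (hb1 : b ≤ 1) (he : 1 ≤ e) : b ^ e ≤ b := by
  rcases eq_or_lt_of_le hb0 with h | h
  · rw [← h, Real.zero_rpow (by linarith)]
  · calc b ^ e ≤ b ^ (1:ℝ) := Real.rpow_le_rpow_of_exponent_ge h hb1 he
    _ = b := Real.rpow_one b

lemma aux_meas_rpow {α} [MeasurableSpace α] {f g : α → ℝ} (hf : Measurable f)
    (hg : Measurable g) (h0 : ∀ x, 0 ≤ f x) : Measurable fun x => f x ^ g x := by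
  have heq : (fun x => f x ^ g x) =
      fun x => if f x = 0 then (if g x = 0 then 1 else 0)
        else Real.exp (Real.log (f x) * g x) := by
    funext x
    rcases eq_or_lt_of_le (h0 x) with h | h
    · rw [if_pos h.symm, ← h]
      split_ifs with hgx
      · rw [hgx, Real.rpow_zero]
      · rw [Real.zero_rpow hgx]
    · rw [if_neg h.ne', Real.rpow_def_of_pos h]
  rw [heq]
  exact Measurable.ite (hf (measurableSet_singleton 0))
    (Measurable.ite (hg (measurableSet_singleton 0)) measurable_const measurable_const)
    (Real.measurable_exp.comp ((Real.measurable_log.comp hf).mul hg))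

set_option maxHeartbeats 1000000 in
/-- uniform (in `u`) lower estimate of the gradient norms for exponents
`p_n ≥ p` converging uniformly to `p`. -/
theorem stmt6 {N : ℕ} (hN : 2 ≤ N) (Ω : Set (EN N)) (hΩo : IsOpen Ω)
    (hΩne : Ω.Nonempty) (hΩb : Bornology.IsBounded Ω)
    (p : EN N → ℝ) (pn : ℕ → EN N → ℝ)
    (hpm : Measurable p) (hpnm : ∀ n, Measurable (pn n))
    (c C : ℝ) (hc : 1 < c)
    (hpb : ∀ x ∈ Ω, c ≤ p x ∧ p x ≤ C)
    (hbn : ∀ n, ∀ x ∈ Ω, p x ≤ pn n x ∧ pn n x ≤ C)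
    (hp : TendstoUniformlyOn (fun n x => pn n x) p atTop Ω) :
    ∀ δ : ℝ, 0 < δ → ∃ n₀ : ℕ, ∀ n ≥ n₀, ∀ u : EN N → ℝ, TestFn Ω u →
      luxNorm Ω p (grad u) ≤ (1 + δ) * luxNorm Ω (pn n) (grad u) := by
  intro δ hδ
  have hc0 : (0:ℝ) < c := lt_trans one_pos hc
  have h1δ : (1:ℝ) < 1 + δ := by linarith
  have hΩfin : volume Ω < ⊤ := hΩb.measure_lt_top
  set V : ℝ := (volume Ω).toReal with hVdef
  have hV0 : 0 ≤ V := ENNReal.toReal_nonneg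
  set a : ℝ := ((1+δ) ^ c)⁻¹ with hadef
  have hA1 : 1 < (1+δ)^c := Real.one_lt_rpow h1δ hc0
  have ha0 : 0 < a := by rw [hadef]; positivity
  have ha1 : a < 1 := by rw [hadef]; exact inv_lt_one_of_one_lt₀ hA1
  set θ : ℝ := min (1/2) ((1 - a)/(2*(V+1))) with hθdef
  have hθ0 : 0 < θ := lt_min (by norm_num) (div_pos (by linarith) (by linarith))
  have hθhalf : θ ≤ 1/2 := min_le_left _ _
  have hθ1 : θ ≤ 1 := by linarith
  set ε : ℝ := Real.log ((1+a)/(2*a)) / Real.log (1/θ) with hεdef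
  have hb1 : 1 < (1+a)/(2*a) := by rw [lt_div_iff₀ (by linarith)]; linarith
  have hlogb : 0 < Real.log ((1+a)/(2*a)) := Real.log_pos hb1
  have h1θ : 1 < 1/θ := by rw [lt_div_iff₀ hθ0]; linarith
  have hlogθ : 0 < Real.log (1/θ) := Real.log_pos h1θ
  have hε : 0 < ε := div_pos hlogb hlogθ
  have hkey : (1/θ)^ε = (1+a)/(2*a) := by
    rw [Real.rpow_def_of_pos (by positivity), hεdef, mul_comm,
      div_mul_cancel₀ _ hlogθ.ne', Real.exp_log (by positivity)]
  have hθcV : θ ^ c * V ≤ (1-a)/2 := by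
    have h6 : θ ^ c ≤ θ := by
      calc θ ^ c ≤ θ ^ (1:ℝ) := Real.rpow_le_rpow_of_exponent_ge hθ0 hθ1 hc.le
      _ = θ := Real.rpow_one θ
    have h7 : θ ≤ (1 - a)/(2*(V+1)) := min_le_right _ _
    have h8 : (1 - a)/(2*(V+1)) * V ≤ (1-a)/2 := by
      rw [div_mul_eq_mul_div, div_le_div_iff₀ (by linarith) (by norm_num)]
      nlinarith
    have h9 : θ ^ c * V ≤ θ * V := mul_le_mul_of_nonneg_right h6 hV0
    have h10 : θ * V ≤ (1 - a)/(2*(V+1)) * V := mul_le_mul_of_nonneg_right h7 hV0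
    linarith
  obtain ⟨n₀, hn₀⟩ := eventually_atTop.mp (Metric.tendstoUniformlyOn_iff.mp hp ε hε)
  refine ⟨n₀, fun n hn u hu => ?_⟩
  obtain ⟨husm, hucs, husupp⟩ := hu
  have hgc : Continuous (grad u) := ((husm.continuous_fderiv (by simp))).norm
  have hgcs : HasCompactSupport (grad u) := (hucs.fderiv ℝ).norm
  have hg0 : ∀ x, 0 ≤ grad u x := fun x => norm_nonneg _
  have habs : ∀ x, |grad u x| = grad u x := fun x => abs_of_nonneg (hg0 x)
  obtain ⟨M, hM⟩ := hgcs.exists_bound_of_continuous hgc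
  have hM' : ∀ x, grad u x ≤ M := fun x => le_trans (le_abs_self _) (hM x)
  obtain ⟨x₀, -⟩ := hΩne
  have hM0 : 0 ≤ M := le_trans (hg0 x₀) (hM' x₀)
  have hgm : Measurable (grad u) := hgc.measurable
  have hΩms : MeasurableSet Ω := hΩo.measurableSet
  have hpnb : ∀ x ∈ Ω, c ≤ pn n x ∧ pn n x ≤ C := fun x hx =>
    ⟨le_trans (hpb x hx).1 (hbn n x hx).1, (hbn n x hx).2⟩
  have hint : ∀ (r : EN N → ℝ), Measurable r → (∀ x ∈ Ω, c ≤ r x ∧ r x ≤ C) →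
      ∀ l : ℝ, 0 < l → IntegrableOn (fun x => (grad u x / l) ^ (r x)) Ω := by
    intro r hrm hrb l hl
    have hmeas : Measurable fun x => (grad u x / l) ^ (r x) :=
      aux_meas_rpow (hgm.div_const l) hrm (fun x => div_nonneg (hg0 x) hl.le)
    refine Integrable.mono' (g := fun _ => (1 + M/l) ^ C)
      (integrableOn_const hΩfin.ne) hmeas.aestronglyMeasurable ?_
    rw [ae_restrict_iff' hΩms]
    refine ae_of_all _ fun x hx => ?_
    have h1 : 0 ≤ grad u x / l := div_nonneg (hg0 x) hl.le
    have hMl : 0 ≤ M / l := div_nonneg hM0 hl.le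
    rw [Real.norm_of_nonneg (Real.rpow_nonneg h1 _)]
    have h2 : grad u x / l ≤ 1 + M / l := by
      have h3 : grad u x / l ≤ M / l := div_le_div_of_nonneg_right (hM' x) hl.le
      linarith
    calc (grad u x / l) ^ (r x) ≤ (1 + M/l) ^ (r x) :=
          Real.rpow_le_rpow h1 h2 (by linarith [(hrb x hx).1])
      _ ≤ (1 + M/l) ^ C :=
          Real.rpow_le_rpow_of_exponent_le (by linarith) (hrb x hx).2
  simp only [luxNorm, luxNormM, habs]
  set S := {l : ℝ | 0 < l ∧ (∫ x in Ω, (grad u x / l) ^ (pn n x)) ≤ 1} with hSdef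
  set T := {l : ℝ | 0 < l ∧ (∫ x in Ω, (grad u x / l) ^ (p x)) ≤ 1} with hTdef
  have hSne : S.Nonempty := by
    have hl₀ : (0:ℝ) < M * V + M + 1 := by positivity
    set l₀ : ℝ := M * V + M + 1 with hl₀def
    refine ⟨l₀, hl₀, ?_⟩
    have hle1 : ∀ x, grad u x / l₀ ≤ 1 := fun x => by
      rw [div_le_one hl₀]; nlinarith [hM' x, hV0, hM0, hg0 x]
    have hint1 : IntegrableOn (fun x => grad u x / l₀) Ω := by
      refine Integrable.mono' (g := fun _ => M / l₀)
        (integrableOn_const hΩfin.ne)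
        ((hgc.div_const l₀)).aestronglyMeasurable (ae_of_all _ fun x => ?_)
      rw [Real.norm_of_nonneg (div_nonneg (hg0 x) hl₀.le)]
      exact div_le_div_of_nonneg_right (hM' x) hl₀.le
    calc (∫ x in Ω, (grad u x / l₀) ^ (pn n x))
        ≤ ∫ x in Ω, grad u x / l₀ :=
          setIntegral_mono_on (hint _ (hpnm n) hpnb _ hl₀) hint1 hΩms
            (fun x hx => aux_pow_le_self _ _ (div_nonneg (hg0 x) hl₀.le) (hle1 x)
              (by linarith [(hpnb x hx).1]))
      _ ≤ ∫ _x in Ω, (M / l₀ : ℝ) :=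
          setIntegral_mono_on hint1 (integrableOn_const hΩfin.ne) hΩms
            (fun x _ => div_le_div_of_nonneg_right (hM' x) hl₀.le)
      _ = V * (M / l₀) := by rw [setIntegral_const, smul_eq_mul, measureReal_def]
      _ ≤ 1 := by rw [mul_div_assoc', div_le_one hl₀]; nlinarith
  have hstep : ∀ l ∈ S, (1+δ) * l ∈ T := by
    intro l hl
    obtain ⟨hl0, hlint⟩ := hl
    refine ⟨by positivity, ?_⟩
    have hintp : IntegrableOn (fun x => (grad u x / ((1+δ)*l)) ^ (p x)) Ω :=
      hint p hpm hpb _ (by positivity)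
    have hintq : IntegrableOn (fun x => (grad u x / l) ^ (pn n x)) Ω :=
      hint _ (hpnm n) hpnb _ hl0
    have haθ : (1/θ)^ε * a * 1 = (1+a)/2 := by
      rw [hkey, mul_one, div_mul_eq_mul_div, div_eq_div_iff (by linarith) (by norm_num)]
      ring
    calc (∫ x in Ω, (grad u x / ((1+δ)*l)) ^ (p x))
        ≤ ∫ x in Ω, (θ^c + (1/θ)^ε * a * (grad u x / l) ^ (pn n x)) := by
          refine setIntegral_mono_on hintp
            ((integrableOn_const hΩfin.ne).add (hintq.const_mul _)) hΩms
            fun x hx => ?_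
          have hrw : grad u x / ((1+δ) * l) = (grad u x / l) / (1+δ) := by
            rw [mul_comm, ← div_div]
          rw [hrw]
          refine aux_pt c δ θ ε a (grad u x / l) (p x) (pn n x) hδ hc0 hadef hθ0 hθ1
            (div_nonneg (hg0 x) hl0.le) (hpb x hx).1 (hbn n x hx).1 ?_
          have hd := hn₀ n hn x hx
          rw [Real.dist_eq] at hd
          have h := abs_lt.mp hd
          linarith [h.1, h.2]
      _ = θ^c * V + (1/θ)^ε * a * ∫ x in Ω, (grad u x / l) ^ (pn n x) := by
          rw [integral_add (integrableOn_const (C := θ ^ c) hΩfin.ne) (hintq.const_mul _),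
            setIntegral_const, smul_eq_mul, measureReal_def, integral_const_mul, mul_comm V (θ^c)]
      _ ≤ θ^c * V + (1/θ)^ε * a * 1 :=
          add_le_add_right (mul_le_mul_of_nonneg_left hlint (by positivity)) _
      _ ≤ 1 := by rw [haθ]; linarith [hθcV]
  have hBdd : BddBelow T := ⟨0, fun m hm => hm.1.le⟩
  have h1 : ∀ l ∈ S, sInf T ≤ (1+δ) * l := fun l hl => csInf_le hBdd (hstep l hl)
  have h2 : sInf T / (1+δ) ≤ sInf S :=
    le_csInf hSne fun l hl => (div_le_iff₀ (by linarith)).2 (by rw [mul_comm]; exact h1 l hl)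
  have h3 := (div_le_iff₀ (by linarith : (0:ℝ) < 1+δ)).1 h2
  linarith [mul_comm (sInf S) (1+δ)]
end
end

section
/- Let q_n : Ω → ℝ be measurable exponents with c ≤ q_n ≤ q pointwise on Ω for all n (with c > 1) and ‖q_n − q‖_{L^∞(Ω)} → 0. Then for every δ > 0 there exists n₀ such that for all n ≥ n₀ and ALL u ∈ C_c^∞(Ω) simultaneously: ‖u‖_{L^{q_n(·)}(Ω)} ≤ (1+δ)·‖u‖_{L^{q(·)}(Ω)} (the error is uniform in u). -/
open MeasureTheory Metric Set Filter Topology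

set_option maxHeartbeats 1000000

noncomputable section

open Pointwise in
/-- uniform (in `u`) upper estimate of the norms for exponents `q_n ≤ q`
converging uniformly to `q`. -/
theorem stmt7 {N : ℕ} (hN : 2 ≤ N) (Ω : Set (EN N)) (hΩo : IsOpen Ω)
    (hΩne : Ω.Nonempty) (hΩb : Bornology.IsBounded Ω)
    (q : EN N → ℝ) (qn : ℕ → EN N → ℝ)
    (hqm : Measurable q) (hqnm : ∀ n, Measurable (qn n))
    (c C : ℝ) (hc : 1 < c)
    (hqb : ∀ x ∈ Ω, c ≤ q x ∧ q x ≤ C)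
    (hbn : ∀ n, ∀ x ∈ Ω, c ≤ qn n x ∧ qn n x ≤ q x)
    (hq : TendstoUniformlyOn (fun n x => qn n x) q atTop Ω) :
    ∀ δ : ℝ, 0 < δ → ∃ n₀ : ℕ, ∀ n ≥ n₀, ∀ u : EN N → ℝ, TestFn Ω u →
      luxNorm Ω (qn n) u ≤ (1 + δ) * luxNorm Ω q u := by
  intro δ hδ
  have hΩm : MeasurableSet Ω := hΩo.measurableSet
  have hVlt : volume Ω < ⊤ := hΩb.measure_lt_top
  set V : ℝ := (volume Ω).toReal with hV
  have hV0 : 0 ≤ V := ENNReal.toReal_nonneg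
  have hc0 : (0:ℝ) < c := lt_trans one_pos hc
  have h1δ : (1:ℝ) < 1 + δ := by linarith
  obtain ⟨x₀, hx₀⟩ := hΩne
  have hcC : c ≤ C := le_trans (hqb x₀ hx₀).1 (hqb x₀ hx₀).2
  have hC0 : 0 < C := lt_of_lt_of_le hc0 hcC
  set m : ℝ := (1 + δ) ^ (-c) with hm
  have hm0 : 0 < m := Real.rpow_pos_of_pos (by linarith) _
  have hm1 : m < 1 := by
    rw [hm]
    exact Real.rpow_lt_one_of_one_lt_of_neg h1δ (by linarith)
  have hq2 : (0:ℝ) < (1 - m) / 2 / (V + 1) := div_pos (by linarith) (by positivity)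
  set s₀ : ℝ := min 1 ((1 - m) / 2 / (V + 1)) with hs₀
  have hs₀0 : 0 < s₀ := lt_min one_pos hq2
  have hs₀1 : s₀ ≤ 1 := min_le_left _ _
  have hs₀V : s₀ ^ c * V ≤ (1 - m) / 2 := by
    have h1 : s₀ ^ c ≤ s₀ ^ (1:ℝ) :=
      Real.rpow_le_rpow_of_exponent_ge hs₀0 hs₀1 (le_of_lt hc)
    rw [Real.rpow_one] at h1
    have h2 : s₀ ≤ (1 - m) / 2 / (V + 1) := min_le_right _ _
    calc s₀ ^ c * V ≤ ((1 - m) / 2 / (V + 1)) * V := by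
          exact mul_le_mul (h1.trans h2) le_rfl hV0 hq2.le
      _ ≤ (1 - m) / 2 := by
          rw [div_mul_eq_mul_div, div_le_iff₀ (by positivity)]
          nlinarith
  set K : ℝ := (1 + m) / (2 * m) with hK
  have hK1 : 1 < K := by rw [hK, lt_div_iff₀ (by positivity)]; linarith
  set ε₀ : ℝ := Real.log K / (1 + |Real.log s₀|) with hε₀
  have hε₀0 : 0 < ε₀ := div_pos (Real.log_pos hK1) (by positivity)
  have hs₀exp : s₀ ^ (-ε₀) ≤ K := by
    rw [Real.rpow_def_of_pos hs₀0, ← Real.exp_log (show 0 < K by linarith)]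
    apply Real.exp_le_exp.2
    have hls : Real.log s₀ ≤ 0 := Real.log_nonpos hs₀0.le hs₀1
    have habs : -Real.log s₀ ≤ 1 + |Real.log s₀| := by
      rw [abs_of_nonpos hls]; linarith
    calc Real.log s₀ * (-ε₀) = ε₀ * (-Real.log s₀) := by ring
      _ ≤ ε₀ * (1 + |Real.log s₀|) := mul_le_mul_of_nonneg_left habs hε₀0.le
      _ = Real.log K := by rw [hε₀]; field_simp
  have hkey : s₀ ^ (-ε₀) * m ≤ (1 + m) / 2 := by
    calc s₀ ^ (-ε₀) * m ≤ K * m := mul_le_mul_of_nonneg_right hs₀exp hm0.le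
      _ = (1 + m) / 2 := by rw [hK]; field_simp
  have hone_le : (1:ℝ) ≤ s₀ ^ (-ε₀) :=
    Real.one_le_rpow_of_pos_of_le_one_of_nonpos hs₀0 hs₀1 (by linarith)
  obtain ⟨n₀, hn₀⟩ := eventually_atTop.1 (Metric.tendstoUniformlyOn_iff.1 hq ε₀ hε₀0)
  refine ⟨n₀, fun n hn u hu => ?_⟩
  obtain ⟨M₀, hM₀⟩ := hu.1.continuous.bounded_above_of_compact_support hu.2.1
  set M : ℝ := max M₀ 0 with hMdef
  have hM0 : 0 ≤ M := le_max_right _ _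
  have hM : ∀ x, |u x| ≤ M := fun x => le_max_of_le_left (by
    simpa [Real.norm_eq_abs] using hM₀ x)
  have hum : Measurable u := hu.1.continuous.measurable
  unfold luxNorm luxNormM
  -- integrability helper
  have hint : ∀ (r : EN N → ℝ), Measurable r → (∀ x ∈ Ω, c ≤ r x ∧ r x ≤ C) →
      ∀ l : ℝ, 0 < l → IntegrableOn (fun x => (|u x| / l) ^ (r x)) Ω := by
    intro r hrm hrb l hl
    have hmeas : Measurable fun x => (|u x| / l) ^ (r x) :=
      (hum.abs.div_const l).pow hrm
    have hconstK : IntegrableOn (fun _ : EN N => max 1 ((M / l) ^ C)) Ω :=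
      integrableOn_const hVlt.ne
    refine Integrable.mono' hconstK hmeas.aestronglyMeasurable ?_
    filter_upwards [ae_restrict_mem hΩm] with x hx
    rw [Real.norm_eq_abs, abs_of_nonneg (Real.rpow_nonneg (by positivity) _)]
    rcases le_or_gt (|u x| / l) 1 with hb | hb
    · exact le_max_of_le_left
        (Real.rpow_le_one (by positivity) hb (le_trans (by linarith) (hrb x hx).1))
    · refine le_max_of_le_right ?_
      calc (|u x| / l) ^ (r x) ≤ (|u x| / l) ^ C :=
            Real.rpow_le_rpow_of_exponent_le hb.le (hrb x hx).2
        _ ≤ (M / l) ^ C :=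
            Real.rpow_le_rpow (by positivity)
              (div_le_div_of_nonneg_right (hM x) hl.le) hC0.le
  have hqnb : ∀ x ∈ Ω, c ≤ qn n x ∧ qn n x ≤ C := fun x hx =>
    ⟨(hbn n x hx).1, le_trans (hbn n x hx).2 (hqb x hx).2⟩
  set Sq : Set ℝ := {l : ℝ | 0 < l ∧ (∫ x in Ω, (|u x| / l) ^ (q x)) ≤ 1} with hSq
  set Sn : Set ℝ := {l : ℝ | 0 < l ∧ (∫ x in Ω, (|u x| / l) ^ (qn n x)) ≤ 1} with hSn
  show sInf Sn ≤ (1 + δ) * sInf Sq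
  have hconst : IntegrableOn (fun _ : EN N => M / ((M+1)*(V+1))) Ω :=
    integrableOn_const hVlt.ne
  -- Sq is nonempty
  have hSqne : Sq.Nonempty := by
    refine ⟨(M+1)*(V+1), by positivity, ?_⟩
    have hpt : ∀ x ∈ Ω, (|u x| / ((M+1)*(V+1))) ^ (q x) ≤ M / ((M+1)*(V+1)) := by
      intro x hx
      have hlpos : (0:ℝ) < (M+1)*(V+1) := by positivity
      have hble : |u x| / ((M+1)*(V+1)) ≤ M / ((M+1)*(V+1)) :=
        div_le_div_of_nonneg_right (hM x) hlpos.le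
      have hb1 : |u x| / ((M+1)*(V+1)) ≤ 1 := by
        refine hble.trans ?_
        rw [div_le_one hlpos]; nlinarith
      rcases eq_or_lt_of_le (show (0:ℝ) ≤ |u x| / ((M+1)*(V+1)) by positivity) with h0 | h0
      · rw [← h0, Real.zero_rpow (by nlinarith [(hqb x hx).1] : q x ≠ 0)]
        positivity
      · calc (|u x| / ((M+1)*(V+1))) ^ (q x)
            ≤ (|u x| / ((M+1)*(V+1))) ^ (1:ℝ) :=
              Real.rpow_le_rpow_of_exponent_ge h0 hb1 (by linarith [(hqb x hx).1])
          _ = |u x| / ((M+1)*(V+1)) := Real.rpow_one _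
          _ ≤ M / ((M+1)*(V+1)) := hble
    calc (∫ x in Ω, (|u x| / ((M+1)*(V+1))) ^ (q x))
        ≤ ∫ _x in Ω, M / ((M+1)*(V+1)) :=
          setIntegral_mono_on (hint q hqm hqb _ (by positivity)) hconst hΩm hpt
      _ = M / ((M+1)*(V+1)) * V := by
          rw [setIntegral_const, smul_eq_mul, mul_comm, measureReal_def]
      _ ≤ 1 := by rw [div_mul_eq_mul_div, div_le_one (by positivity)]; nlinarith
  have hSnbdd : BddBelow Sn := ⟨0, fun l hl => hl.1.le⟩
  -- key inclusion
  have hsub : (1 + δ) • Sq ⊆ Sn := by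
    rintro _ ⟨l, hl, rfl⟩
    obtain ⟨hl0, hlint⟩ := hl
    have hl10 : (0:ℝ) < (1 + δ) * l := by positivity
    refine ⟨by simpa [smul_eq_mul] using hl10, ?_⟩
    simp only [smul_eq_mul]
    have hpt : ∀ x ∈ Ω, (|u x| / ((1+δ)*l)) ^ (qn n x) ≤
        s₀ ^ (-ε₀) * m * (|u x| / l) ^ (q x) + s₀ ^ c := by
      intro x hx
      obtain ⟨hc_le, h_le_q⟩ := hbn n x hx
      have hdist : |q x - qn n x| ≤ ε₀ := by
        have h := hn₀ n hn x hx
        rw [Real.dist_eq] at h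
        exact h.le
      have hd1 : -ε₀ ≤ qn n x - q x := by
        rcases abs_le.1 hdist with ⟨h1, h2⟩; linarith
      set s : ℝ := |u x| / l with hsdef
      have hs0 : 0 ≤ s := by positivity
      have hrw : |u x| / ((1+δ)*l) = s / (1+δ) := by
        rw [hsdef, div_div, mul_comm]
      rw [hrw]
      have hAnn : 0 ≤ s₀ ^ (-ε₀) * m := by positivity
      rcases lt_or_ge s s₀ with hss | hss
      · have ht1 : s / (1+δ) ≤ s₀ := le_trans (div_le_self hs0 (by linarith)) hss.le
        have h2 : (s/(1+δ)) ^ (qn n x) ≤ s₀ ^ c := by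
          calc (s/(1+δ)) ^ (qn n x) ≤ s₀ ^ (qn n x) :=
                Real.rpow_le_rpow (by positivity) ht1 (by linarith)
            _ ≤ s₀ ^ c := Real.rpow_le_rpow_of_exponent_ge hs₀0 hs₀1 hc_le
        have h3 : 0 ≤ s₀ ^ (-ε₀) * m * s ^ (q x) := by positivity
        linarith
      · have hspos : 0 < s := lt_of_lt_of_le hs₀0 hss
        have h1 : (s/(1+δ)) ^ (qn n x) = (1+δ) ^ (-(qn n x)) * s ^ (qn n x) := by
          rw [Real.div_rpow hs0 (by linarith), Real.rpow_neg (by linarith)]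
          rw [div_eq_mul_inv, mul_comm]
        have h2 : (1+δ) ^ (-(qn n x)) ≤ m := by
          rw [hm]
          exact Real.rpow_le_rpow_of_exponent_le (by linarith) (by linarith)
        have h4 : s ^ (qn n x - q x) ≤ s₀ ^ (-ε₀) := by
          rcases le_or_gt s 1 with hs1 | hs1
          · calc s ^ (qn n x - q x) ≤ s ^ (-ε₀) :=
                  Real.rpow_le_rpow_of_exponent_ge hspos hs1 hd1
              _ = (s ^ ε₀)⁻¹ := by rw [Real.rpow_neg hs0]
              _ ≤ (s₀ ^ ε₀)⁻¹ := by
                  apply inv_anti₀ (Real.rpow_pos_of_pos hs₀0 _)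
                  exact Real.rpow_le_rpow hs₀0.le hss hε₀0.le
              _ = s₀ ^ (-ε₀) := by rw [Real.rpow_neg hs₀0.le]
          · calc s ^ (qn n x - q x) ≤ 1 :=
                  Real.rpow_le_one_of_one_le_of_nonpos hs1.le (by linarith)
              _ ≤ s₀ ^ (-ε₀) := hone_le
        have h3 : s ^ (qn n x) ≤ s₀ ^ (-ε₀) * s ^ (q x) := by
          have hsplit : s ^ (qn n x) = s ^ (q x) * s ^ (qn n x - q x) := by
            rw [← Real.rpow_add hspos]; ring_nf
          rw [hsplit]
          calc s ^ (q x) * s ^ (qn n x - q x) ≤ s ^ (q x) * s₀ ^ (-ε₀) :=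
                mul_le_mul_of_nonneg_left h4 (Real.rpow_nonneg hs0 _)
            _ = s₀ ^ (-ε₀) * s ^ (q x) := mul_comm _ _
        calc (s/(1+δ)) ^ (qn n x) = (1+δ) ^ (-(qn n x)) * s ^ (qn n x) := h1
          _ ≤ m * (s₀ ^ (-ε₀) * s ^ (q x)) :=
              mul_le_mul h2 h3 (Real.rpow_nonneg hs0 _) hm0.le
          _ = s₀ ^ (-ε₀) * m * s ^ (q x) := by ring
          _ ≤ s₀ ^ (-ε₀) * m * s ^ (q x) + s₀ ^ c :=
              le_add_of_nonneg_right (Real.rpow_nonneg hs₀0.le _)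
    have hIq : IntegrableOn (fun x => (|u x| / l) ^ (q x)) Ω := hint q hqm hqb l hl0
    have hIn : IntegrableOn (fun x => (|u x| / ((1+δ)*l)) ^ (qn n x)) Ω :=
      hint (qn n) (hqnm n) hqnb _ hl10
    have hconst2 : IntegrableOn (fun _ : EN N => s₀ ^ c) Ω :=
      integrableOn_const hVlt.ne
    have hIrhs : IntegrableOn
        (fun x => s₀ ^ (-ε₀) * m * (|u x| / l) ^ (q x) + s₀ ^ c) Ω :=
      (hIq.const_mul _).add hconst2
    calc (∫ x in Ω, (|u x| / ((1+δ)*l)) ^ (qn n x))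
        ≤ ∫ x in Ω, (s₀ ^ (-ε₀) * m * (|u x| / l) ^ (q x) + s₀ ^ c) :=
          setIntegral_mono_on hIn hIrhs hΩm hpt
      _ = s₀ ^ (-ε₀) * m * (∫ x in Ω, (|u x| / l) ^ (q x)) + s₀ ^ c * V := by
          rw [integral_add (hIq.const_mul _) hconst2, integral_const_mul,
            setIntegral_const, smul_eq_mul, measureReal_def, ← hV]
          ring
      _ ≤ s₀ ^ (-ε₀) * m * 1 + (1 - m) / 2 := by
          have hAnn : 0 ≤ s₀ ^ (-ε₀) * m := by positivity
          exact add_le_add (mul_le_mul_of_nonneg_left hlint hAnn) hs₀V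
      _ ≤ 1 := by rw [mul_one]; linarith
  -- conclude
  have hineq : sInf Sn ≤ sInf ((1 + δ) • Sq) :=
    csInf_le_csInf hSnbdd (hSqne.smul_set) hsub
  rwa [Real.sInf_smul_of_nonneg (by linarith : (0:ℝ) ≤ 1 + δ), smul_eq_mul] at hineq
end
end

section
/- Assume 0 ∈ Ω, 1 < p(0) < N and q(0) = p* where p* := N·p(0)/(N − p(0)). For ε > 0 set q_ε(x) := q(εx) and, for u ∈ C_c^∞(B_ε(0)), set u_ε(x) := u(εx) ∈ C_c^∞(B_1(0)). Then for every δ > 0 there exists ε₀ > 0 such that for all 0 < ε < ε₀ and ALL nonzero u ∈ C_c^∞(B_ε(0)) simultaneously: (1−δ)·ε^{N/p*}·‖u_ε‖_{L^{q_ε(·)}(B_1(0))} ≤ ‖u‖_{L^{q(·)}(B_ε(0))} ≤ (1+δ)·ε^{N/p*}·‖u_ε‖_{L^{q_ε(·)}(B_1(0))}. -/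
open MeasureTheory Metric Set Filter Topology
open Pointwise

noncomputable section

lemma luxNorm_eq {N : ℕ} (U : Set (EN N)) (r u : EN N → ℝ) :
    luxNorm U r u = sInf {l : ℝ | 0 < l ∧ (∫ x in U, (|u x| / l) ^ (r x)) ≤ 1} := rfl

lemma luxNormM_nonneg {N : ℕ} (m : Measure (EN N)) (U : Set (EN N)) (r u : EN N → ℝ) :
    0 ≤ luxNormM m U r u :=
  Real.sInf_nonneg fun _ hl => hl.1.le

lemma luxNormM_smul {N : ℕ} (m : Measure (EN N)) (U : Set (EN N)) (r u : EN N → ℝ)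
    {a : ℝ} (ha : 0 < a) :
    luxNormM m U r (fun x => a * u x) = a * luxNormM m U r u := by
  unfold luxNormM
  have hset : {l : ℝ | 0 < l ∧ (∫ x in U, (|a * u x| / l) ^ (r x) ∂m) ≤ 1}
      = a • {l : ℝ | 0 < l ∧ (∫ x in U, (|u x| / l) ^ (r x) ∂m) ≤ 1} := by
    ext l
    simp only [Set.mem_smul_set, Set.mem_setOf_eq, smul_eq_mul]
    constructor
    · rintro ⟨hl, hint⟩
      refine ⟨l / a, ⟨div_pos hl ha, ?_⟩, by field_simp⟩
      have heq : (∫ x in U, (|u x| / (l / a)) ^ (r x) ∂m)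
          = ∫ x in U, (|a * u x| / l) ^ (r x) ∂m := by
        apply integral_congr_ae
        filter_upwards with x
        congr 1
        rw [abs_mul, abs_of_pos ha]
        field_simp
      rw [heq]; exact hint
    · rintro ⟨t, ⟨ht, hint⟩, rfl⟩
      refine ⟨by positivity, ?_⟩
      have heq : (∫ x in U, (|a * u x| / (a * t)) ^ (r x) ∂m)
          = ∫ x in U, (|u x| / t) ^ (r x) ∂m := by
        apply integral_congr_ae
        filter_upwards with x
        congr 1
        rw [abs_mul, abs_of_pos ha]
        rw [mul_div_mul_left _ _ ha.ne']
      rw [heq]; exact hint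
  rw [hset, Real.sInf_smul_of_nonneg ha.le, smul_eq_mul]

lemma integrableOn_modular {N : ℕ} {R : ℝ} (r w : EN N → ℝ)
    (hrc : ContinuousOn r (closedBall (0 : EN N) R))
    (hr1 : ∀ x ∈ closedBall (0 : EN N) R, 1 ≤ r x)
    (hw : ContinuousOn w (closedBall (0 : EN N) R)) :
    IntegrableOn (fun x => (w x) ^ (r x)) (ball (0 : EN N) R) := by
  have hcont : ContinuousOn (fun x => (w x) ^ (r x)) (closedBall (0 : EN N) R) :=
    hw.rpow hrc fun x hx => Or.inr (lt_of_lt_of_le one_pos (hr1 x hx))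
  exact (hcont.integrableOn_compact (isCompact_closedBall _ _)).mono_set ball_subset_closedBall

lemma exists_admissible {N : ℕ} {R : ℝ} (hR : 0 < R) (r v : EN N → ℝ)
    (hr1 : ∀ x ∈ ball (0 : EN N) R, 1 ≤ r x) (hv : Continuous v)
    (hInt : ∀ l : ℝ, 0 < l →
      IntegrableOn (fun x => (|v x| / l) ^ (r x)) (ball (0 : EN N) R)) :
    ∃ l : ℝ, 0 < l ∧ (∫ x in ball (0 : EN N) R, (|v x| / l) ^ (r x)) ≤ 1 := by
  obtain ⟨B, hB0, hB⟩ : ∃ B : ℝ, 0 ≤ B ∧ ∀ x ∈ closedBall (0 : EN N) R, |v x| ≤ B := by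
    obtain ⟨B, hB⟩ := (isCompact_closedBall (0 : EN N) R).exists_bound_of_continuousOn
      hv.continuousOn
    exact ⟨max B 0, le_max_right _ _, fun x hx => by
      have := hB x hx; rw [Real.norm_eq_abs] at this; exact this.trans (le_max_left _ _)⟩
  set vol := (volume (ball (0 : EN N) R)).toReal with hvol
  have hvol0 : 0 ≤ vol := ENNReal.toReal_nonneg
  set l := (B + 1) * (vol + 1) with hldef
  have hl : 0 < l := by positivity
  refine ⟨l, hl, ?_⟩
  have key : ∀ x ∈ ball (0 : EN N) R, (|v x| / l) ^ (r x) ≤ B / l := by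
    intro x hx
    rcases eq_or_lt_of_le (abs_nonneg (v x)) with h0 | h0
    · rw [← h0]
      rw [zero_div, Real.zero_rpow (by linarith [hr1 x hx])]
      positivity
    · have hle1 : |v x| / l ≤ 1 := by
        have h1 := hB x (ball_subset_closedBall hx)
        rw [div_le_one hl]
        nlinarith
      calc (|v x| / l) ^ (r x) ≤ (|v x| / l) ^ (1 : ℝ) :=
            Real.rpow_le_rpow_of_exponent_ge (by positivity) hle1 (hr1 x hx)
        _ = |v x| / l := Real.rpow_one _
        _ ≤ B / l := by
            gcongr
            exact hB x (ball_subset_closedBall hx)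
  calc (∫ x in ball (0 : EN N) R, (|v x| / l) ^ (r x))
      ≤ ∫ _x in ball (0 : EN N) R, B / l := by
        apply setIntegral_mono_on (hInt l hl) (integrableOn_const
          measure_ball_lt_top.ne) measurableSet_ball key
    _ = vol * (B / l) := by rw [setIntegral_const, smul_eq_mul]; rfl
    _ ≤ 1 := by
        rw [hldef]
        rw [mul_div_assoc']
        rw [div_le_one (by positivity)]
        nlinarith


set_option maxHeartbeats 2000000 in
/-- uniform (in `u`) two-sided dilation estimate for the `L^{q(·)}` norm. -/
theorem stmt9 {N : ℕ} (hN : 2 ≤ N) (Ω : Set (EN N)) (hΩo : IsOpen Ω)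
    (hΩne : Ω.Nonempty) (hΩb : Bornology.IsBounded Ω)
    (p q : EN N → ℝ) (hpc : Continuous p) (hqc : Continuous q)
    (c C : ℝ) (hc : 1 < c)
    (V : Set (EN N)) (hV : V ∈ 𝓝 (0 : EN N))
    (hbV : ∀ x ∈ V, c ≤ p x ∧ p x ≤ C ∧ 1 ≤ q x ∧ q x ≤ C)
    (ρ : ℝ → ℝ) (hρ : Modulus ρ)
    (hpρ : ∀ x y : EN N, |p x - p y| ≤ ρ (dist x y))
    (hqρ : ∀ x y : EN N, |q x - q y| ≤ ρ (dist x y))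
    (h0 : (0 : EN N) ∈ Ω) (hp₀ : 1 < p 0) (hpN : p 0 < N)
    (hq₀ : q 0 = pstar N (p 0)) :
    ∀ δ : ℝ, 0 < δ → ∃ ε₀ : ℝ, 0 < ε₀ ∧ ∀ ε : ℝ, 0 < ε → ε < ε₀ →
      ∀ u : EN N → ℝ, TestFn (ball (0 : EN N) ε) u → u ≠ 0 →
        (1 - δ) * ε ^ ((N : ℝ) / pstar N (p 0)) *
            luxNorm (ball (0 : EN N) 1) (fun x => q (ε • x)) (fun x => u (ε • x)) ≤
          luxNorm (ball (0 : EN N) ε) q u ∧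
        luxNorm (ball (0 : EN N) ε) q u ≤
          (1 + δ) * ε ^ ((N : ℝ) / pstar N (p 0)) *
            luxNorm (ball (0 : EN N) 1) (fun x => q (ε • x)) (fun x => u (ε • x)) := by
  have h0V : (0 : EN N) ∈ V := mem_of_mem_nhds hV
  have hq01 : 1 ≤ q 0 := (hbV 0 h0V).2.2.1
  have hq00 : 0 < q 0 := lt_of_lt_of_le one_pos hq01
  have hρ' : Tendsto (fun t => ρ t * Real.log (1 / t)) (𝓝[>] (0:ℝ)) (𝓝 0) := hρ
  obtain ⟨ε₁, hε₁pos, hball₁⟩ := Metric.mem_nhds_iff.mp hV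
  have main : ∀ δ : ℝ, 0 < δ → δ ≤ 1/2 → ∃ ε₀ : ℝ, 0 < ε₀ ∧ ∀ ε : ℝ, 0 < ε → ε < ε₀ →
      ∀ u : EN N → ℝ, TestFn (ball (0 : EN N) ε) u → u ≠ 0 →
        (1 - δ) * ε ^ ((N : ℝ) / q 0) *
            luxNorm (ball (0 : EN N) 1) (fun x => q (ε • x)) (fun x => u (ε • x)) ≤
          luxNorm (ball (0 : EN N) ε) q u ∧
        luxNorm (ball (0 : EN N) ε) q u ≤
          (1 + δ) * ε ^ ((N : ℝ) / q 0) *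
            luxNorm (ball (0 : EN N) 1) (fun x => q (ε • x)) (fun x => u (ε • x)) := by
    intro δ hδ hδ2
    set θ := Real.log (1 + δ) with hθdef
    have hθ : 0 < θ := Real.log_pos (by linarith)
    have hθN : 0 < θ / N := by
      apply div_pos hθ
      exact_mod_cast Nat.pos_of_ne_zero (by omega)
    have hmod' : {t : ℝ | dist (ρ t * Real.log (1/t)) 0 < θ/N} ∈ 𝓝[>] (0:ℝ) :=
      Metric.tendsto_nhds.mp hρ' (θ/N) hθN
    obtain ⟨ε₂, hε₂pos, hsub⟩ := Metric.mem_nhdsWithin_iff.mp hmod'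
    refine ⟨min (min ε₁ ε₂) 1 / 2, by positivity, ?_⟩
    intro ε hε hεlt u hu hune
    have hm1 := min_le_left (min ε₁ ε₂) 1
    have hm2 := min_le_right (min ε₁ ε₂) 1
    have hm3 := min_le_left ε₁ ε₂
    have hm4 := min_le_right ε₁ ε₂
    have hεε₁ : ε < ε₁ := by linarith
    have hεε₂ : ε < ε₂ := by linarith
    have hε1 : ε < 1 := by linarith
    have hucont : Continuous u := hu.1.continuous
    have hVsub : closedBall (0 : EN N) ε ⊆ V := fun x hx =>
      hball₁ (mem_ball.mpr (lt_of_le_of_lt (mem_closedBall.mp hx) hεε₁))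
    have hq1ε : ∀ x ∈ closedBall (0 : EN N) ε, 1 ≤ q x := fun x hx => (hbV x (hVsub hx)).2.2.1
    have hmem : ∀ y ∈ closedBall (0 : EN N) 1, ε • y ∈ closedBall (0 : EN N) ε := by
      intro y hy
      rw [mem_closedBall_zero_iff] at hy ⊢
      rw [norm_smul, Real.norm_eq_abs, abs_of_pos hε]
      nlinarith
    have hq1' : ∀ y ∈ closedBall (0 : EN N) 1, 1 ≤ q (ε • y) := fun y hy => hq1ε _ (hmem y hy)
    set qε : EN N → ℝ := fun y => q (ε • y) with hqεdef
    set uε : EN N → ℝ := fun y => u (ε • y) with huεdef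
    set A := ε ^ ((N : ℝ) / q 0) with hA
    have hA0 : 0 < A := Real.rpow_pos_of_pos hε _
    -- pointwise power bound
    have hbnd : ∀ y ∈ closedBall (0 : EN N) 1,
        (1 - δ) * A ≤ ε ^ ((N : ℝ) / qε y) ∧
          ε ^ ((N : ℝ) / qε y) ≤ (1 + δ) * A := by
      intro y hy
      have hq1y : 1 ≤ qε y := hq1' y hy
      have hqy0 : 0 < qε y := by linarith
      by_cases hy0 : y = 0
      · subst hy0
        have hqq : qε (0 : EN N) = q 0 := by rw [hqεdef]; simp
        rw [hqq, ← hA]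
        constructor
        · nlinarith
        · nlinarith
      · have ht0 : 0 < ε * ‖y‖ := mul_pos hε (norm_pos_iff.mpr hy0)
        set t := ε * ‖y‖ with htdef
        have htε : t ≤ ε := by
          have h1 : ‖y‖ ≤ 1 := mem_closedBall_zero_iff.mp hy
          nlinarith
        have hdist : dist (ε • y) (0 : EN N) = t := by
          rw [dist_zero_right, norm_smul, Real.norm_eq_abs, abs_of_pos hε]
        have hqd : |qε y - q 0| ≤ ρ t := by rw [hqεdef, ← hdist]; exact hqρ _ _
        have hρt : ρ t * Real.log (1/t) < θ / N := by
          have hin : t ∈ ball (0:ℝ) ε₂ ∩ Ioi 0 := by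
            constructor
            · rw [mem_ball, Real.dist_eq, sub_zero, abs_of_pos ht0]; linarith
            · exact ht0
          have h2 := hsub hin
          rw [mem_setOf_eq, Real.dist_eq, sub_zero] at h2
          exact lt_of_le_of_lt (le_abs_self _) h2
        have hρtnn : 0 ≤ ρ t := by
          have hi : (0:ℕ) < N := by omega
          have hne : ‖EuclideanSpace.single (⟨0, hi⟩ : Fin N) (1:ℝ)‖ = 1 := by
            rw [EuclideanSpace.norm_single]; simp
          have hd : dist (0 : EN N) (t • EuclideanSpace.single (⟨0, hi⟩ : Fin N) (1:ℝ)) = t := by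
            rw [dist_comm, dist_zero_right, norm_smul, hne, Real.norm_eq_abs,
              abs_of_pos ht0, mul_one]
          calc (0:ℝ) ≤ |q 0 - q (t • EuclideanSpace.single (⟨0, hi⟩ : Fin N) (1:ℝ))| :=
                abs_nonneg _
            _ ≤ ρ (dist (0:EN N) (t • EuclideanSpace.single (⟨0, hi⟩ : Fin N) (1:ℝ))) := hqρ _ _
            _ = ρ t := by rw [hd]
        have hlogt0 : 0 ≤ Real.log (1/t) := by
          apply Real.log_nonneg
          rw [le_div_iff₀ ht0, one_mul]
          linarith
        have hloge : |Real.log ε| ≤ Real.log (1/t) := by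
          rw [abs_of_neg (Real.log_neg hε hε1), one_div, Real.log_inv, neg_le_neg_iff]
          exact Real.log_le_log ht0 htε
        have hdiff : |(N:ℝ)/qε y - (N:ℝ)/q 0| ≤ N * ρ t := by
          have heq : (N:ℝ)/qε y - (N:ℝ)/q 0 = (N * (q 0 - qε y)) / (qε y * q 0) := by
            field_simp
          rw [heq, abs_div, abs_mul, abs_of_pos (mul_pos hqy0 hq00), Nat.abs_cast]
          have h1 : 1 ≤ qε y * q 0 := by nlinarith
          have habs : |q 0 - qε y| ≤ ρ t := by rw [abs_sub_comm]; exact hqd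
          calc (N:ℝ) * |q 0 - qε y| / (qε y * q 0)
              ≤ (N:ℝ) * ρ t / 1 := by
                gcongr
            _ = N * ρ t := by ring
        have hs : |((N:ℝ)/qε y - (N:ℝ)/q 0) * Real.log ε| ≤ θ := by
          rw [abs_mul]
          have hNnn : (0:ℝ) ≤ (N:ℝ) := Nat.cast_nonneg N
          calc |(N:ℝ)/qε y - (N:ℝ)/q 0| * |Real.log ε|
              ≤ ((N:ℝ) * ρ t) * Real.log (1/t) :=
                mul_le_mul hdiff hloge (abs_nonneg _) (by positivity)
            _ = (N:ℝ) * (ρ t * Real.log (1/t)) := by ring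
            _ ≤ (N:ℝ) * (θ/(N:ℝ)) := mul_le_mul_of_nonneg_left (le_of_lt hρt) hNnn
            _ = θ := by
                field_simp
        have heq2 : ε ^ ((N:ℝ)/qε y)
            = A * Real.exp (((N:ℝ)/qε y - (N:ℝ)/q 0) * Real.log ε) := by
          rw [hA, Real.rpow_def_of_pos hε, Real.rpow_def_of_pos hε, ← Real.exp_add]
          congr 1
          ring
        obtain ⟨hs1, hs2⟩ := abs_le.mp hs
        have hexpθ : Real.exp θ = 1 + δ := Real.exp_log (by linarith)
        constructor
        · rw [heq2]
          have he1 : Real.exp (-θ) ≤ Real.exp (((N:ℝ)/qε y - (N:ℝ)/q 0) * Real.log ε) :=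
            Real.exp_le_exp.mpr hs1
          have he2 : (1 - δ) ≤ Real.exp (-θ) := by
            rw [Real.exp_neg, hexpθ]
            have h3 : (1 + δ) * (1 + δ)⁻¹ = 1 := mul_inv_cancel₀ (by linarith)
            nlinarith [h3, sq_nonneg δ]
          nlinarith
        · rw [heq2]
          have he1 : Real.exp (((N:ℝ)/qε y - (N:ℝ)/q 0) * Real.log ε) ≤ Real.exp θ :=
            Real.exp_le_exp.mpr hs2
          rw [hexpθ] at he1
          nlinarith
    have hq0ball : ∀ y ∈ ball (0 : EN N) 1, 0 < qε y := fun y hy =>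
      lt_of_lt_of_le one_pos (hq1' y (ball_subset_closedBall hy))
    -- change of variables
    have hcov : ∀ l : ℝ, 0 < l →
        (∫ x in ball (0 : EN N) ε, (|u x| / l) ^ (q x)) =
        ∫ y in ball (0 : EN N) 1, (ε ^ ((N:ℝ)/qε y) * |uε y| / l) ^ (qε y) := by
      intro l hl
      have h1' : (∫ y in ball (0:EN N) 1, (|uε y| / l) ^ (qε y))
          = (ε ^ N)⁻¹ * ∫ x in ball (0:EN N) ε, (|u x| / l) ^ (q x) := by
        have h1 := Measure.setIntegral_comp_smul_of_pos (volume : Measure (EN N))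
          (fun x => (|u x| / l) ^ (q x)) (ball (0 : EN N) 1) hε
        rw [smul_unitBall_of_pos hε, finrank_euclideanSpace_fin, smul_eq_mul] at h1
        exact h1
      have h2 : (∫ x in ball (0:EN N) ε, (|u x| / l) ^ (q x))
          = ε ^ N * ∫ y in ball (0:EN N) 1, (|uε y| / l) ^ (qε y) := by
        rw [h1', ← mul_assoc, mul_inv_cancel₀ (pow_ne_zero _ hε.ne'), one_mul]
      rw [h2, ← integral_const_mul]
      apply setIntegral_congr_fun measurableSet_ball
      intro y hy
      have hqy := hq0ball y hy
      show ε ^ N * (|uε y| / l) ^ (qε y) = (ε ^ ((N:ℝ)/qε y) * |uε y| / l) ^ (qε y)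
      rw [mul_div_assoc, Real.mul_rpow (Real.rpow_nonneg hε.le _) (by positivity)]
      congr 1
      rw [← Real.rpow_natCast ε N, ← Real.rpow_mul hε.le]
      congr 1
      field_simp
    -- continuity / integrability facts
    have hqεcont : Continuous qε := hqc.comp (continuous_const_smul ε)
    have huεcont : Continuous uε := hucont.comp (continuous_const_smul ε)
    have hqεne : ∀ y ∈ closedBall (0:EN N) 1, qε y ≠ 0 := fun y hy =>
      (lt_of_lt_of_le one_pos (hq1' y hy)).ne'
    have hwcont : ContinuousOn (fun y => ε ^ ((N:ℝ)/qε y)) (closedBall (0:EN N) 1) := by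
      have hg : ContinuousOn (fun y => Real.exp (Real.log ε * ((N:ℝ)/qε y)))
          (closedBall (0:EN N) 1) :=
        Real.continuous_exp.comp_continuousOn
          (continuousOn_const.mul (continuousOn_const.div hqεcont.continuousOn hqεne))
      exact hg.congr fun y hy => Real.rpow_def_of_pos hε _
    have hInt2 : ∀ l : ℝ, 0 < l → IntegrableOn
        (fun y => (ε ^ ((N:ℝ)/qε y) * |uε y| / l) ^ (qε y)) (ball (0:EN N) 1) := by
      intro l hl
      apply integrableOn_modular qε _ hqεcont.continuousOn hq1'
      exact (hwcont.mul huεcont.abs.continuousOn).div_const l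
    have hIntc : ∀ b l : ℝ, 0 < l → IntegrableOn
        (fun y => (|b * uε y| / l) ^ (qε y)) (ball (0:EN N) 1) := by
      intro b l hl
      apply integrableOn_modular qε _ hqεcont.continuousOn hq1'
      exact ((continuous_const.mul huεcont).abs.div_const l).continuousOn
    have hc₁ : 0 < (1 - δ) * A := mul_pos (by linarith) hA0
    have hc₃ : 0 < (1 + δ) * A := mul_pos (by linarith) hA0
    -- upper bound
    have hupper : luxNorm (ball (0:EN N) ε) q u ≤
        luxNorm (ball (0:EN N) 1) qε (fun y => ((1 + δ) * A) * uε y) := by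
      rw [luxNorm_eq, luxNorm_eq]
      apply csInf_le_csInf
      · exact ⟨0, fun l hl => hl.1.le⟩
      · obtain ⟨l, hl, hint⟩ := exists_admissible one_pos qε (fun y => ((1 + δ) * A) * uε y)
          (fun y hy => hq1' y (ball_subset_closedBall hy))
          (continuous_const.mul huεcont)
          (fun l hl => hIntc _ l hl)
        exact ⟨l, hl, hint⟩
      · rintro l ⟨hl0, hint⟩
        refine ⟨hl0, ?_⟩
        rw [hcov l hl0]
        refine le_trans (setIntegral_mono_on (hInt2 l hl0) (hIntc _ l hl0)
          measurableSet_ball ?_) hint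
        intro y hy
        apply Real.rpow_le_rpow (by positivity) ?_ (le_of_lt (hq0ball y hy))
        rw [abs_mul, abs_of_pos hc₃]
        gcongr
        exact (hbnd y (ball_subset_closedBall hy)).2
    -- lower bound
    have hlower : luxNorm (ball (0:EN N) 1) qε (fun y => ((1 - δ) * A) * uε y) ≤
        luxNorm (ball (0:EN N) ε) q u := by
      rw [luxNorm_eq, luxNorm_eq]
      apply csInf_le_csInf
      · exact ⟨0, fun l hl => hl.1.le⟩
      · obtain ⟨l, hl, hint⟩ := exists_admissible hε q u
          (fun x hx => hq1ε x (ball_subset_closedBall hx)) hucont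
          (fun l hl => integrableOn_modular q _ hqc.continuousOn hq1ε
            ((hucont.abs.div_const l).continuousOn))
        exact ⟨l, hl, hint⟩
      · rintro l ⟨hl0, hint⟩
        refine ⟨hl0, ?_⟩
        rw [hcov l hl0] at hint
        refine le_trans (setIntegral_mono_on (hIntc _ l hl0) (hInt2 l hl0)
          measurableSet_ball ?_) hint
        intro y hy
        apply Real.rpow_le_rpow (by positivity) ?_ (le_of_lt (hq0ball y hy))
        rw [abs_mul, abs_of_pos hc₁]
        gcongr
        exact (hbnd y (ball_subset_closedBall hy)).1
    have hsm1 : luxNorm (ball (0:EN N) 1) qε (fun y => ((1 - δ) * A) * uε y)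
        = ((1 - δ) * A) * luxNorm (ball (0:EN N) 1) qε uε :=
      luxNormM_smul _ _ _ _ hc₁
    have hsm3 : luxNorm (ball (0:EN N) 1) qε (fun y => ((1 + δ) * A) * uε y)
        = ((1 + δ) * A) * luxNorm (ball (0:EN N) 1) qε uε :=
      luxNormM_smul _ _ _ _ hc₃
    constructor
    · calc (1 - δ) * A * luxNorm (ball (0:EN N) 1) qε uε
          = luxNorm (ball (0:EN N) 1) qε (fun y => ((1 - δ) * A) * uε y) := hsm1.symm
        _ ≤ luxNorm (ball (0:EN N) ε) q u := hlower
    · calc luxNorm (ball (0:EN N) ε) q u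
          ≤ luxNorm (ball (0:EN N) 1) qε (fun y => ((1 + δ) * A) * uε y) := hupper
        _ = (1 + δ) * A * luxNorm (ball (0:EN N) 1) qε uε := hsm3
  -- reduce general δ to δ ≤ 1/2
  intro δ hδ
  obtain ⟨ε₀, hε₀, h⟩ := main (min δ (1/2)) (lt_min hδ (by norm_num)) (min_le_right _ _)
  refine ⟨ε₀, hε₀, fun ε hε hεlt u hu hune => ?_⟩
  obtain ⟨h1, h2⟩ := h ε hε hεlt u hu hune
  rw [← hq₀]
  have hE : 0 ≤ ε ^ ((N:ℝ)/q 0) *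
      luxNorm (ball (0:EN N) 1) (fun x => q (ε • x)) (fun x => u (ε • x)) :=
    mul_nonneg (Real.rpow_nonneg hε.le _) (luxNormM_nonneg _ _ _ _)
  have hmin : min δ (1/2) ≤ δ := min_le_left _ _
  constructor
  · refine le_trans ?_ h1
    rw [mul_assoc, mul_assoc]
    exact mul_le_mul_of_nonneg_right (by linarith) hE
  · refine le_trans h2 ?_
    rw [mul_assoc, mul_assoc]
    exact mul_le_mul_of_nonneg_right (by linarith) hE
end
end

section
/- Assume 0 ∈ Ω, 1 < p(0) < N and q(0) = p* where p* := N·p(0)/(N − p(0)). For ε > 0 set p_ε(x) := p(εx) and, for u ∈ C_c^∞(B_ε(0)), set u_ε(x) := u(εx) ∈ C_c^∞(B_1(0)) (so that ∇u_ε(x) = ε·(∇u)(εx)). Then for every δ > 0 there exists ε₀ > 0 such that for all 0 < ε < ε₀ and ALL nonzero u ∈ C_c^∞(B_ε(0)) simultaneously: (1−δ)·ε^{N/p*}·‖|∇u_ε|‖_{L^{p_ε(·)}(B_1(0))} ≤ ‖|∇u|‖_{L^{p(·)}(B_ε(0))} ≤ (1+δ)·ε^{N/p*}·‖|∇u_ε|‖_{L^{p_ε(·)}(B_1(0))}.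 -/
open MeasureTheory Metric Set Filter Topology

noncomputable section

lemma aux_integral_ball_smul {N : ℕ} (f : EN N → ℝ) {ε : ℝ} (hε : 0 < ε) :
    ∫ x in ball (0 : EN N) ε, f x = ε ^ N * ∫ y in ball (0 : EN N) 1, f (ε • y) := by
  have hmem : ∀ y : EN N, ε • y ∈ ball (0 : EN N) ε ↔ y ∈ ball (0 : EN N) 1 := by
    intro y
    simp only [mem_ball_zero_iff, norm_smul, Real.norm_eq_abs, abs_of_pos hε]
    constructor
    · intro h; exact lt_of_mul_lt_mul_left (by simpa using h) hε.le
    · intro h; calc ε * ‖y‖ < ε * 1 := by exact (mul_lt_mul_iff_right₀ hε).2 h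
        _ = ε := mul_one ε
  have hind : ∀ y : EN N, (ball (0:EN N) ε).indicator f (ε • y)
      = (ball (0:EN N) 1).indicator (fun y => f (ε • y)) y := by
    intro y
    by_cases hy : y ∈ ball (0:EN N) 1
    · rw [indicator_of_mem ((hmem y).2 hy), indicator_of_mem hy]
    · rw [indicator_of_notMem (fun h => hy ((hmem y).1 h)), indicator_of_notMem hy]
  have h2 := Measure.integral_comp_smul (volume) ((ball (0:EN N) ε).indicator f) ε
  rw [finrank_euclideanSpace_fin] at h2
  have hεN : (0:ℝ) < ε ^ N := pow_pos hε N
  rw [abs_of_pos (inv_pos.2 hεN), smul_eq_mul] at h2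
  have h3 : ε ^ N * ∫ y, (ball (0:EN N) ε).indicator f (ε • y)
      = ∫ x, (ball (0:EN N) ε).indicator f x := by
    rw [h2]; field_simp
  rw [← integral_indicator measurableSet_ball, ← h3]
  congr 1
  · rw [← integral_indicator measurableSet_ball]
    congr 1
    exact funext fun y => hind y

lemma aux_grad_smul {N : ℕ} {u : EN N → ℝ} (hu : ContDiff ℝ (⊤ : ℕ∞) u) {ε : ℝ}
    (hε : 0 < ε) (y : EN N) :
    grad (fun x => u (ε • x)) y = ε * grad u (ε • y) := by
  have hdL : HasFDerivAt (fun x : EN N => ε • x)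
      (ε • ContinuousLinearMap.id ℝ (EN N)) y :=
    (ε • ContinuousLinearMap.id ℝ (EN N)).hasFDerivAt
  have hdu : HasFDerivAt u (fderiv ℝ u (ε • y)) (ε • y) :=
    (hu.differentiable (by simp) (ε • y)).hasFDerivAt
  have hcomp : HasFDerivAt (fun x => u (ε • x))
      ((fderiv ℝ u (ε • y)).comp (ε • ContinuousLinearMap.id ℝ (EN N))) y :=
    hdu.comp y hdL
  have h2 : (fderiv ℝ u (ε • y)).comp (ε • ContinuousLinearMap.id ℝ (EN N))
      = ε • fderiv ℝ u (ε • y) := by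
    ext v; simp
  rw [grad, hcomp.fderiv, h2, norm_smul]
  simp [grad, abs_of_pos hε]

lemma aux_integrableOn {N : ℕ} {f : EN N → ℝ} (hm : Measurable f) {s : Set (EN N)}
    (hs : MeasurableSet s) (hb : Bornology.IsBounded s) {M : ℝ}
    (hf : ∀ x ∈ s, |f x| ≤ M) : IntegrableOn f s := by
  refine Integrable.mono' (g := fun _ => M)
    (integrableOn_const hb.measure_lt_top.ne) hm.aestronglyMeasurable ?_
  exact (ae_restrict_iff' hs).2 (ae_of_all _ fun x hx => by
    simpa [Real.norm_eq_abs] using hf x hx)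

lemma aux_rpow_bound {t T e cc CC : ℝ} (ht : 0 ≤ t) (hT : t ≤ T) (hce : cc ≤ e)
    (heC : e ≤ CC) (hcc : 0 < cc) : t ^ e ≤ max 1 (T ^ CC) := by
  rcases le_or_gt t 1 with h1 | h1
  · refine le_max_iff.2 (Or.inl ?_)
    calc t ^ e ≤ 1 ^ e := Real.rpow_le_rpow ht h1 (hcc.le.trans hce)
      _ = 1 := Real.one_rpow e
  · refine le_max_iff.2 (Or.inr ?_)
    calc t ^ e ≤ t ^ CC := Real.rpow_le_rpow_of_exponent_le h1.le heC
      _ ≤ T ^ CC := Real.rpow_le_rpow (by linarith) hT ((hcc.le.trans hce).trans heC)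

set_option maxHeartbeats 2000000 in
theorem stmt10' {N : ℕ} (hN : 2 ≤ N)
    (p : EN N → ℝ) (hpc : Continuous p)
    (c C : ℝ) (hc : 1 < c)
    (V : Set (EN N)) (hV : V ∈ 𝓝 (0 : EN N))
    (hbV : ∀ x ∈ V, c ≤ p x ∧ p x ≤ C)
    (ρ : ℝ → ℝ) (hρ : Modulus ρ)
    (hpρ : ∀ x y : EN N, |p x - p y| ≤ ρ (dist x y))
    (hp₀ : 1 < p 0) (hpN : p 0 < N) :
    ∀ δ : ℝ, 0 < δ → ∃ ε₀ : ℝ, 0 < ε₀ ∧ ∀ ε : ℝ, 0 < ε → ε < ε₀ →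
      ∀ u : EN N → ℝ, TestFn (ball (0 : EN N) ε) u → u ≠ 0 →
        (1 - δ) * ε ^ ((N : ℝ) / pstar N (p 0)) *
            luxNorm (ball (0 : EN N) 1) (fun x => p (ε • x)) (grad (fun x => u (ε • x))) ≤
          luxNorm (ball (0 : EN N) ε) p (grad u) ∧
        luxNorm (ball (0 : EN N) ε) p (grad u) ≤
          (1 + δ) * ε ^ ((N : ℝ) / pstar N (p 0)) *
            luxNorm (ball (0 : EN N) 1) (fun x => p (ε • x)) (grad (fun x => u (ε • x))) := by
  intro δ hδ
  have h0V : (0 : EN N) ∈ V := mem_of_mem_nhds hV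
  obtain ⟨hcp0, hp0C⟩ := hbV 0 h0V
  have hc0 : (0:ℝ) < c := lt_trans one_pos hc
  have hp0pos : (0:ℝ) < p 0 := lt_trans one_pos hp₀
  have hNpos : (0:ℝ) < N := lt_trans hp0pos hpN
  have hNp0 : (0:ℝ) < (N:ℝ) - p 0 := sub_pos.2 hpN
  set a : ℝ := (N : ℝ) / pstar N (p 0) with ha
  have haval : a = (N:ℝ) / p 0 - 1 := by
    rw [ha, pstar]
    field_simp
  set δ' : ℝ := min δ (1/2) with hδ'def
  have hδ'pos : 0 < δ' := lt_min hδ (by norm_num)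
  have hδ'δ : δ' ≤ δ := min_le_left _ _
  have hδ'h : δ' ≤ 1/2 := min_le_right _ _
  have h1δ' : (0:ℝ) < 1 - δ' := by linarith
  set K : ℝ := (N:ℝ) / (c * c) with hK
  have hKpos : 0 < K := div_pos hNpos (mul_pos hc0 hc0)
  have hlog1δ : 0 < Real.log (1 + δ') := Real.log_pos (by linarith)
  set η : ℝ := Real.log (1 + δ') / K with hη
  have hηpos : 0 < η := div_pos hlog1δ hKpos
  obtain ⟨ε₁, hε₁pos, hε₁⟩ := Metric.tendsto_nhdsWithin_nhds.mp hρ η hηpos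
  obtain ⟨r0, hr0pos, hr0V⟩ := Metric.mem_nhds_iff.mp hV
  refine ⟨min (min ε₁ r0) 1, by positivity, ?_⟩
  intro ε hεpos hεlt u hu _
  have hεε₁ : ε < ε₁ := lt_of_lt_of_le hεlt ((min_le_left _ _).trans (min_le_left _ _))
  have hεr0 : ε < r0 := lt_of_lt_of_le hεlt ((min_le_left _ _).trans (min_le_right _ _))
  have hε1 : ε < 1 := lt_of_lt_of_le hεlt (min_le_right _ _)
  have hεa : 0 < ε ^ a := Real.rpow_pos_of_pos hεpos a
  have hmemV : ∀ x : EN N, ‖x‖ < ε → x ∈ V := fun x hx =>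
    hr0V (mem_ball_zero_iff.2 (hx.trans hεr0))
  have hsmall : ∀ y ∈ ball (0:EN N) 1, ‖ε • y‖ < ε := by
    intro y hy
    rw [norm_smul, Real.norm_eq_abs, abs_of_pos hεpos]
    calc ε * ‖y‖ < ε * 1 := (mul_lt_mul_iff_right₀ hεpos).2 (mem_ball_zero_iff.1 hy)
      _ = ε := mul_one ε
  have hpV1 : ∀ y ∈ ball (0:EN N) 1, c ≤ p (ε • y) ∧ p (ε • y) ≤ C := fun y hy =>
    hbV _ (hmemV _ (hsmall y hy))
  have hpVε : ∀ x ∈ ball (0:EN N) ε, c ≤ p x ∧ p x ≤ C := fun x hx =>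
    hbV _ (hmemV _ (mem_ball_zero_iff.1 hx))
  -- sigma
  set t : EN N → ℝ := fun y => (N:ℝ)/(p (ε • y)) - (N:ℝ)/(p 0) with htdef
  set σ : EN N → ℝ := fun y => ε ^ (t y) with hσdef
  have hσpos : ∀ y, 0 < σ y := fun y => Real.rpow_pos_of_pos hεpos _
  have hσbound : ∀ y ∈ ball (0:EN N) 1, 1 - δ' ≤ σ y ∧ σ y ≤ 1 + δ' := by
    intro y hy
    have hεyc : c ≤ p (ε • y) := (hpV1 y hy).1
    have hεypos : 0 < p (ε • y) := lt_of_lt_of_le hc0 hεyc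
    have key : |t y * Real.log ε| ≤ Real.log (1 + δ') := by
      by_cases hy0 : ε • y = 0
      · have ht0 : t y = 0 := by simp [htdef, hy0]
        rw [ht0, zero_mul, abs_zero]; exact hlog1δ.le
      · set s : ℝ := ‖ε • y‖ with hs
        have hspos : 0 < s := norm_pos_iff.2 hy0
        have hsε : s < ε := hsmall y hy
        have hs1 : s < 1 := hsε.trans hε1
        have hρs : |p (ε • y) - p 0| ≤ ρ s := by
          have := hpρ (ε • y) 0
          rwa [dist_zero_right] at this
        have hρs0 : 0 ≤ ρ s := le_trans (abs_nonneg _) hρs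
        have hslog : ρ s * Real.log (1/s) < η := by
          have h := hε₁ (mem_Ioi.2 hspos)
            (by rw [Real.dist_eq, sub_zero, abs_of_pos hspos]; exact hsε.trans hεε₁)
          rw [Real.dist_eq, sub_zero] at h
          exact lt_of_le_of_lt (le_abs_self _) h
        have hty : |t y| ≤ K * ρ s := by
          have h1 : t y = (N:ℝ) * (p 0 - p (ε • y)) / (p (ε • y) * p 0) := by
            rw [htdef]
            field_simp
          rw [h1, abs_div, abs_mul]
          rw [abs_of_pos (mul_pos hεypos hp0pos), abs_of_pos hNpos]
          rw [div_le_iff₀ (mul_pos hεypos hp0pos)]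
          have habs : |p 0 - p (ε • y)| ≤ ρ s := by
            rw [abs_sub_comm]; exact hρs
          calc (N:ℝ) * |p 0 - p (ε • y)| ≤ (N:ℝ) * ρ s := by
                exact mul_le_mul_of_nonneg_left habs hNpos.le
            _ = (K * ρ s) * (c * c) := by rw [hK]; field_simp
            _ ≤ (K * ρ s) * (p (ε • y) * p 0) := by
                have : 0 ≤ K * ρ s := mul_nonneg hKpos.le hρs0
                exact mul_le_mul_of_nonneg_left
                  (mul_le_mul hεyc hcp0 hc0.le hεypos.le) this
        have hlogε : |Real.log ε| ≤ Real.log (1/s) := by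
          rw [abs_of_neg (Real.log_neg hεpos hε1), one_div, Real.log_inv, neg_le_neg_iff]
          exact Real.log_le_log hspos hsε.le
        calc |t y * Real.log ε| = |t y| * |Real.log ε| := abs_mul _ _
          _ ≤ (K * ρ s) * Real.log (1/s) := by
              refine mul_le_mul hty hlogε (abs_nonneg _) (mul_nonneg hKpos.le hρs0)
          _ = K * (ρ s * Real.log (1/s)) := by ring
          _ ≤ K * η := mul_le_mul_of_nonneg_left hslog.le hKpos.le
          _ = Real.log (1+δ') := by rw [hη]; field_simp
    have hσexp : σ y = Real.exp (t y * Real.log ε) := by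
      rw [hσdef]
      show ε ^ (t y) = _
      rw [Real.rpow_def_of_pos hεpos, mul_comm]
    have hkey := abs_le.1 key
    constructor
    · rw [hσexp]
      have hlogδ' : Real.log (1+δ') ≤ δ' := by
        have := Real.log_le_sub_one_of_pos (show (0:ℝ) < 1+δ' by linarith)
        linarith
      calc 1 - δ' ≤ 1 - Real.log (1+δ') := by linarith
        _ ≤ Real.exp (-(Real.log (1+δ'))) := by
            have := Real.add_one_le_exp (-(Real.log (1+δ')))
            linarith
        _ ≤ Real.exp (t y * Real.log ε) := Real.exp_le_exp.2 (by linarith [hkey.1])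
    · rw [hσexp]
      calc Real.exp (t y * Real.log ε) ≤ Real.exp (Real.log (1+δ')) :=
            Real.exp_le_exp.2 hkey.2
        _ = 1 + δ' := Real.exp_log (by linarith)
  -- gradients
  have hucd := hu.1
  set g : EN N → ℝ := grad u with hgdef
  set g1 : EN N → ℝ := grad (fun x => u (ε • x)) with hg1def
  have hg1 : ∀ y, g1 y = ε * g (ε • y) := fun y => aux_grad_smul hucd hεpos y
  have hgc : Continuous g := (hucd.continuous_fderiv (by simp)).norm
  have hgnn : ∀ x, 0 ≤ g x := fun x => norm_nonneg _
  have hg1nn : ∀ y, 0 ≤ g1 y := fun y => norm_nonneg _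
  have hg1c : Continuous g1 := by
    have : g1 = fun y => ε * g (ε • y) := funext hg1
    rw [this]
    exact continuous_const.mul (hgc.comp (continuous_const_smul ε))
  obtain ⟨M, hM'⟩ := hgc.bounded_above_of_compact_support ((hu.2.1.fderiv (𝕜 := ℝ)).norm)
  have hM : ∀ x, g x ≤ M := fun x =>
    le_trans (le_abs_self _) (by simpa [Real.norm_eq_abs] using hM' x)
  have hM0 : 0 ≤ M := le_trans (hgnn 0) (hM 0)
  -- measurability
  have hpm : Measurable p := hpc.measurable
  have hpm1 : Measurable (fun y : EN N => p (ε • y)) :=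
    (hpc.comp (continuous_const_smul ε)).measurable
  have htm : Measurable t := (measurable_const.div hpm1).sub measurable_const
  have hσm : Measurable σ := measurable_const.pow htm
  have hmeasI : ∀ l : ℝ, Measurable (fun x => (|g x| / l) ^ (p x)) := fun l =>
    ((hgc.abs.measurable).div_const l).pow hpm
  have hmeasJ : ∀ l : ℝ, Measurable (fun y => (|g1 y| / l) ^ (p (ε • y))) := fun l =>
    ((hg1c.abs.measurable).div_const l).pow hpm1
  have hmeasMix : ∀ l : ℝ,
      Measurable (fun y => (σ y * (ε ^ a * |g1 y| / l)) ^ (p (ε • y))) := fun l =>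
    (hσm.mul ((measurable_const.mul hg1c.abs.measurable).div_const l)).pow hpm1
  -- integrability
  have hintI : ∀ l : ℝ, 0 < l →
      IntegrableOn (fun x => (|g x| / l) ^ (p x)) (ball (0:EN N) ε) := by
    intro l hl
    refine aux_integrableOn (M := max 1 ((M / l) ^ C)) (hmeasI l)
      measurableSet_ball isBounded_ball ?_
    intro x hx
    rw [abs_of_nonneg (Real.rpow_nonneg (by positivity) _)]
    refine aux_rpow_bound (by positivity) ?_ (hpVε x hx).1 (hpVε x hx).2 hc0
    rw [abs_of_nonneg (hgnn x)]
    exact (div_le_div_iff_of_pos_right hl).2 (hM x)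
  have hintJ : ∀ l : ℝ, 0 < l →
      IntegrableOn (fun y => (|g1 y| / l) ^ (p (ε • y))) (ball (0:EN N) 1) := by
    intro l hl
    refine aux_integrableOn (M := max 1 ((ε * M / l) ^ C)) (hmeasJ l)
      measurableSet_ball isBounded_ball ?_
    intro y hy
    rw [abs_of_nonneg (Real.rpow_nonneg (by positivity) _)]
    refine aux_rpow_bound (by positivity) ?_ (hpV1 y hy).1 (hpV1 y hy).2 hc0
    rw [abs_of_nonneg (hg1nn y), hg1 y]
    have : ε * g (ε • y) ≤ ε * M := mul_le_mul_of_nonneg_left (hM _) hεpos.le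
    exact (div_le_div_iff_of_pos_right hl).2 this
  have hintMix : ∀ l : ℝ, 0 < l →
      IntegrableOn (fun y => (σ y * (ε ^ a * |g1 y| / l)) ^ (p (ε • y)))
        (ball (0:EN N) 1) := by
    intro l hl
    refine aux_integrableOn (M := max 1 (((1 + δ') * (ε ^ a * (ε * M) / l)) ^ C))
      (hmeasMix l) measurableSet_ball isBounded_ball ?_
    intro y hy
    rw [abs_of_nonneg (Real.rpow_nonneg (by positivity) _)]
    refine aux_rpow_bound (by positivity) ?_ (hpV1 y hy).1 (hpV1 y hy).2 hc0
    have hb1 : |g1 y| ≤ ε * M := by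
      rw [abs_of_nonneg (hg1nn y), hg1 y]
      exact mul_le_mul_of_nonneg_left (hM _) hεpos.le
    have hσle : σ y ≤ 1 + δ' := (hσbound y hy).2
    have hstep : σ y * (ε ^ a * |g1 y| / l) ≤ (1+δ') * (ε ^ a * (ε * M) / l) := by
      refine mul_le_mul hσle ?_ (by positivity) (by linarith)
      exact (div_le_div_iff_of_pos_right hl).2 (mul_le_mul_of_nonneg_left hb1 hεa.le)
    exact hstep
  -- key identity
  have hI : ∀ l : ℝ, 0 < l →
      (∫ x in ball (0:EN N) ε, (|g x| / l) ^ (p x))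
        = ∫ y in ball (0:EN N) 1, (σ y * (ε ^ a * |g1 y| / l)) ^ (p (ε • y)) := by
    intro l hl
    rw [aux_integral_ball_smul (fun x => (|g x| / l) ^ (p x)) hεpos, ← integral_const_mul]
    refine setIntegral_congr_fun measurableSet_ball (fun y hy => ?_)
    have hq'c : c ≤ p (ε • y) := (hpV1 y hy).1
    have hq'pos : 0 < p (ε • y) := lt_of_lt_of_le hc0 hq'c
    have hfac : σ y * ε ^ a * ε = ε ^ ((N:ℝ)/(p (ε • y))) := by
      rw [hσdef]
      show ε ^ (t y) * ε ^ a * ε = _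
      rw [← Real.rpow_add hεpos, ← Real.rpow_add_one hεpos.ne']
      congr 1
      rw [htdef, haval]
      ring
    have hbase : σ y * (ε ^ a * |g1 y| / l)
        = ε ^ ((N:ℝ)/(p (ε • y))) * (|g (ε • y)| / l) := by
      rw [abs_of_nonneg (hg1nn y), hg1 y, abs_of_nonneg (hgnn _)]
      calc σ y * (ε ^ a * (ε * g (ε • y)) / l)
          = (σ y * ε ^ a * ε) * g (ε • y) / l := by ring
        _ = ε ^ ((N:ℝ)/(p (ε • y))) * (g (ε • y) / l) := by rw [hfac]; ring
    rw [hbase, Real.mul_rpow (Real.rpow_nonneg hεpos.le _) (by positivity),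
      ← Real.rpow_mul hεpos.le]
    have hNq : (N:ℝ)/(p (ε • y)) * (p (ε • y)) = (N:ℝ) := by
      field_simp
    rw [hNq, Real.rpow_natCast]
  -- the two Luxemburg sets
  set A : Set ℝ := {l | 0 < l ∧ (∫ x in ball (0:EN N) ε, (|g x| / l) ^ (p x)) ≤ 1} with hAdef
  set B : Set ℝ :=
    {l | 0 < l ∧ (∫ y in ball (0:EN N) 1, (|g1 y| / l) ^ (p (ε • y))) ≤ 1} with hBdef
  have hluxA : luxNorm (ball (0:EN N) ε) p g = sInf A := rfl
  have hluxB : luxNorm (ball (0:EN N) 1) (fun x => p (ε • x)) g1 = sInf B := rfl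
  have hBA : ∀ μ ∈ B, (1 + δ') * ε ^ a * μ ∈ A := by
    intro μ hμ
    obtain ⟨hμpos, hμint⟩ := hμ
    have hlpos : 0 < (1 + δ') * ε ^ a * μ := by positivity
    refine ⟨hlpos, ?_⟩
    rw [hI _ hlpos]
    refine le_trans (setIntegral_mono_on (hintMix _ hlpos) (hintJ μ hμpos)
      measurableSet_ball ?_) hμint
    intro y hy
    refine Real.rpow_le_rpow (by positivity) ?_ (hc0.le.trans (hpV1 y hy).1)
    have heq : σ y * (ε ^ a * |g1 y| / ((1 + δ') * ε ^ a * μ))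
        = σ y / (1 + δ') * (|g1 y| / μ) := by
      field_simp
    rw [heq]
    have h1 : σ y / (1 + δ') ≤ 1 := by
      rw [div_le_one (by linarith)]
      exact (hσbound y hy).2
    calc σ y / (1 + δ') * (|g1 y| / μ) ≤ 1 * (|g1 y| / μ) := by
          exact mul_le_mul_of_nonneg_right h1 (by positivity)
      _ = |g1 y| / μ := one_mul _
  have hAB : ∀ l ∈ A, l / ((1 - δ') * ε ^ a) ∈ B := by
    intro l hl
    obtain ⟨hlpos, hlint⟩ := hl
    have hμpos : 0 < l / ((1 - δ') * ε ^ a) := by positivity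
    refine ⟨hμpos, ?_⟩
    rw [hI _ hlpos] at hlint
    refine le_trans (setIntegral_mono_on (hintJ _ hμpos) (hintMix l hlpos)
      measurableSet_ball ?_) hlint
    intro y hy
    refine Real.rpow_le_rpow (by positivity) ?_ (hc0.le.trans (hpV1 y hy).1)
    have heq : |g1 y| / (l / ((1 - δ') * ε ^ a))
        = (1 - δ') * (ε ^ a * |g1 y| / l) := by
      field_simp
    rw [heq]
    exact mul_le_mul_of_nonneg_right (hσbound y hy).1 (by positivity)
  -- B is nonempty
  set vol1 : ℝ := (volume (ball (0:EN N) 1)).toReal with hvol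
  have hvol0 : 0 ≤ vol1 := ENNReal.toReal_nonneg
  set Kv : ℝ := (max vol1 1) ^ ((1:ℝ)/c) with hKvdef
  have hmax1 : (1:ℝ) ≤ max vol1 1 := le_max_right _ _
  have hKv1 : (1:ℝ) ≤ Kv := by
    calc (1:ℝ) = 1 ^ ((1:ℝ)/c) := (Real.one_rpow _).symm
      _ ≤ Kv := Real.rpow_le_rpow zero_le_one hmax1 (by positivity)
  have hKvpos : 0 < Kv := lt_of_lt_of_le one_pos hKv1
  set μ₀ : ℝ := (ε * M + 1) * Kv with hμ₀def
  have hμ₀pos : 0 < μ₀ := by positivity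
  have hμ₀B : μ₀ ∈ B := by
    refine ⟨hμ₀pos, ?_⟩
    have hKvc : Kv⁻¹ ^ c = (max vol1 1)⁻¹ := by
      rw [Real.inv_rpow (by positivity), hKvdef, ← Real.rpow_mul (by positivity)]
      rw [one_div_mul_cancel hc0.ne', Real.rpow_one]
    have hbound : ∀ y ∈ ball (0:EN N) 1, (|g1 y| / μ₀) ^ (p (ε • y)) ≤ Kv⁻¹ ^ c := by
      intro y hy
      have hb1 : |g1 y| / μ₀ ≤ Kv⁻¹ := by
        rw [div_le_iff₀ hμ₀pos, abs_of_nonneg (hg1nn y), hg1 y]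
        calc ε * g (ε • y) ≤ ε * M := mul_le_mul_of_nonneg_left (hM _) hεpos.le
          _ ≤ ε * M + 1 := by linarith
          _ = Kv⁻¹ * μ₀ := by rw [hμ₀def]; field_simp
      have hexp : c ≤ p (ε • y) := (hpV1 y hy).1
      calc (|g1 y| / μ₀) ^ (p (ε • y)) ≤ Kv⁻¹ ^ (p (ε • y)) :=
            Real.rpow_le_rpow (by positivity) hb1 (hc0.le.trans hexp)
        _ ≤ Kv⁻¹ ^ c := Real.rpow_le_rpow_of_exponent_ge (by positivity)
            (inv_le_one_of_one_le₀ hKv1) hexp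
    calc ∫ y in ball (0:EN N) 1, (|g1 y| / μ₀) ^ (p (ε • y))
        ≤ ∫ _y in ball (0:EN N) 1, Kv⁻¹ ^ c :=
          setIntegral_mono_on (hintJ μ₀ hμ₀pos)
            (integrableOn_const measure_ball_lt_top.ne)
            measurableSet_ball hbound
      _ = vol1 * (Kv⁻¹ ^ c) := by rw [setIntegral_const, smul_eq_mul]; rfl
      _ ≤ 1 := by
          rw [hKvc]
          calc vol1 * (max vol1 1)⁻¹ ≤ (max vol1 1) * (max vol1 1)⁻¹ := by
                exact mul_le_mul_of_nonneg_right (le_max_left _ _) (by positivity)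
            _ = 1 := mul_inv_cancel₀ (by positivity)
  have hBne : B.Nonempty := ⟨μ₀, hμ₀B⟩
  have hAne : A.Nonempty := ⟨_, hBA μ₀ hμ₀B⟩
  have hAbdd : BddBelow A := ⟨0, fun x hx => hx.1.le⟩
  have hBbdd : BddBelow B := ⟨0, fun x hx => hx.1.le⟩
  have hLnn : 0 ≤ sInf A := Real.sInf_nonneg (fun x hx => hx.1.le)
  have hRnn : 0 ≤ sInf B := Real.sInf_nonneg (fun x hx => hx.1.le)
  have hRight : sInf A ≤ (1 + δ') * ε ^ a * sInf B := by
    have h1 : ∀ μ ∈ B, sInf A / ((1 + δ') * ε ^ a) ≤ μ := by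
      intro μ hμ
      rw [div_le_iff₀ (by positivity)]
      calc sInf A ≤ (1 + δ') * ε ^ a * μ := csInf_le hAbdd (hBA μ hμ)
        _ = μ * ((1 + δ') * ε ^ a) := by ring
    have h2 : sInf A / ((1 + δ') * ε ^ a) ≤ sInf B := le_csInf hBne h1
    rw [div_le_iff₀ (by positivity)] at h2
    linarith
  have hLeft : (1 - δ') * ε ^ a * sInf B ≤ sInf A := by
    refine le_csInf hAne (fun l hl => ?_)
    have h1 := csInf_le hBbdd (hAB l hl)
    rw [le_div_iff₀ (by positivity)] at h1
    linarith
  rw [hluxA, hluxB]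
  have h0 : 0 ≤ ε ^ a * sInf B := mul_nonneg hεa.le hRnn
  constructor
  · have h2 : (1 - δ) * ε ^ a * sInf B ≤ (1 - δ') * ε ^ a * sInf B := by nlinarith
    linarith [hLeft]
  · have h2 : (1 + δ') * ε ^ a * sInf B ≤ (1 + δ) * ε ^ a * sInf B := by nlinarith
    linarith [hRight]

/-- uniform (in `u`) two-sided dilation estimate for the gradient
`L^{p(·)}` norm. -/
theorem stmt10 {N : ℕ} (hN : 2 ≤ N) (Ω : Set (EN N)) (hΩo : IsOpen Ω)
    (hΩne : Ω.Nonempty) (hΩb : Bornology.IsBounded Ω)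
    (p q : EN N → ℝ) (hpc : Continuous p) (hqc : Continuous q)
    (c C : ℝ) (hc : 1 < c)
    (V : Set (EN N)) (hV : V ∈ 𝓝 (0 : EN N))
    (hbV : ∀ x ∈ V, c ≤ p x ∧ p x ≤ C ∧ 1 ≤ q x ∧ q x ≤ C)
    (ρ : ℝ → ℝ) (hρ : Modulus ρ)
    (hpρ : ∀ x y : EN N, |p x - p y| ≤ ρ (dist x y))
    (hqρ : ∀ x y : EN N, |q x - q y| ≤ ρ (dist x y))
    (h0 : (0 : EN N) ∈ Ω) (hp₀ : 1 < p 0) (hpN : p 0 < N)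
    (hq₀ : q 0 = pstar N (p 0)) :
    ∀ δ : ℝ, 0 < δ → ∃ ε₀ : ℝ, 0 < ε₀ ∧ ∀ ε : ℝ, 0 < ε → ε < ε₀ →
      ∀ u : EN N → ℝ, TestFn (ball (0 : EN N) ε) u → u ≠ 0 →
        (1 - δ) * ε ^ ((N : ℝ) / pstar N (p 0)) *
            luxNorm (ball (0 : EN N) 1) (fun x => p (ε • x)) (grad (fun x => u (ε • x))) ≤
          luxNorm (ball (0 : EN N) ε) p (grad u) ∧
        luxNorm (ball (0 : EN N) ε) p (grad u) ≤
          (1 + δ) * ε ^ ((N : ℝ) / pstar N (p 0)) *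
            luxNorm (ball (0 : EN N) 1) (fun x => p (ε • x)) (grad (fun x => u (ε • x))) := by
  intro δ hδ
  exact stmt10' hN p hpc c C hc V hV (fun x hx => ⟨(hbV x hx).1, (hbV x hx).2.1⟩)
    ρ hρ hpρ hp₀ hpN δ hδ
end
end

section
/- Assume the critical set A is nonempty. Let x₀ ∈ ℝ^N and R ≥ 1 with B_R(x₀) ⊆ Ω, and write p_R^− := inf_{B_R(x₀)} p, p_R^+ := sup_{B_R(x₀)} p, q_R^+ := sup_{B_R(x₀)} q. Let u ∈ C_c^∞(B_1(0)) be nonzero with |u| ≤ 1 and |∇u| ≤ 1 on B_1(0). If R^{N − p_R^+}·∫_{B_1(0)} |∇u|^{p_R^+} dx > 1, R^N·∫_{B_1(0)} |u|^{q_R^+} dx > 1, and R^{(N − p_R^−)/p_R^− − N/q_R^+}·‖|∇u|‖_{L^{p_R^−}(B_1(0))} / ‖u‖_{L^{q_R^+}(B_1(0))} < S̄, then S(p(·),q(·),Ω) < S̄. -/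
open MeasureTheory Metric Set Filter Topology

noncomputable section

namespace Stmt13Aux

lemma luxNorm_nonneg {N : ℕ} (U : Set (EN N)) (r u : EN N → ℝ) : 0 ≤ luxNorm U r u :=
  Real.sInf_nonneg (fun _ hl => hl.1.le)

lemma mem_ball_scale {N : ℕ} (x₀ : EN N) {R : ℝ} (hR : 0 < R) (x : EN N) :
    x ∈ ball x₀ R ↔ R⁻¹ • (x - x₀) ∈ ball (0 : EN N) 1 := by
  simp only [mem_ball_iff_norm, sub_zero, norm_smul, norm_inv, Real.norm_eq_abs,
    abs_of_pos hR]
  rw [inv_mul_eq_div, div_lt_one hR]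

lemma scale_integral {N : ℕ} (x₀ : EN N) {R : ℝ} (hR : 0 < R) (F : EN N → ℝ) :
    ∫ x in ball x₀ R, F (R⁻¹ • (x - x₀)) = R ^ (N : ℕ) * ∫ y in ball (0 : EN N) 1, F y := by
  have h1 : (Set.indicator (ball x₀ R) (fun x => F (R⁻¹ • (x - x₀))))
      = fun x => Set.indicator (ball (0 : EN N) 1) F (R⁻¹ • (x - x₀)) := by
    funext x
    by_cases hx : x ∈ ball x₀ R
    · rw [Set.indicator_of_mem hx, Set.indicator_of_mem ((mem_ball_scale x₀ hR x).1 hx)]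
    · rw [Set.indicator_of_notMem hx,
        Set.indicator_of_notMem (fun h => hx ((mem_ball_scale x₀ hR x).2 h))]
  rw [← integral_indicator measurableSet_ball, h1]
  have h2 : ∫ x, Set.indicator (ball (0 : EN N) 1) F (R⁻¹ • (x - x₀))
      = ∫ x, Set.indicator (ball (0 : EN N) 1) F (R⁻¹ • x) := by
    simpa [sub_eq_add_neg] using
      integral_add_right_eq_self (μ := volume)
        (fun z => Set.indicator (ball (0 : EN N) 1) F (R⁻¹ • z)) (-x₀)
  rw [h2, MeasureTheory.Measure.integral_comp_inv_smul_of_nonneg volume _ hR.le,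
    integral_indicator measurableSet_ball, finrank_euclideanSpace_fin, smul_eq_mul]

lemma luxNorm_const {N : ℕ} (U : Set (EN N)) {r : ℝ} (hr : 0 < r) (f : EN N → ℝ)
    (hI : 0 < ∫ x in U, |f x| ^ r) :
    luxNorm U (fun _ => r) f = (∫ x in U, |f x| ^ r) ^ (1 / r) := by
  set I := ∫ x in U, |f x| ^ r with hIdef
  have hIpow : 0 < I ^ (1 / r) := Real.rpow_pos_of_pos hI _
  have key : ∀ l : ℝ, 0 < l → (∫ x in U, (|f x| / l) ^ r) = I / l ^ r := by
    intro l hl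
    have : (fun x => (|f x| / l) ^ r) = fun x => |f x| ^ r / l ^ r :=
      funext fun x => Real.div_rpow (abs_nonneg _) hl.le r
    rw [this, integral_div]
  have hset : {l : ℝ | 0 < l ∧ (∫ x in U, (|f x| / l) ^ r) ≤ 1} = Ici (I ^ (1 / r)) := by
    ext l
    simp only [mem_setOf_eq, mem_Ici]
    constructor
    · rintro ⟨hl, hle⟩
      rw [key l hl, div_le_one (Real.rpow_pos_of_pos hl r)] at hle
      calc I ^ (1 / r) ≤ (l ^ r) ^ (1 / r) := Real.rpow_le_rpow hI.le hle (by positivity)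
        _ = l := by
          rw [← Real.rpow_mul hl.le, mul_one_div_cancel hr.ne', Real.rpow_one]
    · intro hle
      have hl : 0 < l := lt_of_lt_of_le hIpow hle
      refine ⟨hl, ?_⟩
      rw [key l hl, div_le_one (Real.rpow_pos_of_pos hl r)]
      calc I = (I ^ (1 / r)) ^ r := by
            rw [← Real.rpow_mul hI.le, one_div_mul_cancel hr.ne', Real.rpow_one]
        _ ≤ l ^ r := Real.rpow_le_rpow hIpow.le hle hr.le
  rw [luxNorm, luxNormM, hset, csInf_Ici]

lemma integrableOn_of_bdd {N : ℕ} {s : Set (EN N)} (hs : volume s ≠ ⊤) {f : EN N → ℝ}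
    (hf : AEStronglyMeasurable f (volume : Measure (EN N))) (hsm : MeasurableSet s)
    {M : ℝ} (hM : ∀ x ∈ s, |f x| ≤ M) :
    IntegrableOn f s (volume : Measure (EN N)) := by
  apply MeasureTheory.Measure.integrableOn_of_bounded hs hf (M := M)
  exact (ae_restrict_iff' hsm).2 (Filter.Eventually.of_forall fun x hx => by
    simpa using hM x hx)

end Stmt13Aux

set_option maxHeartbeats 2000000 in
/-- a large subcritical ball forces the strict inequality
`S(p(·),q(·),Ω) < S̄`. -/
theorem stmt13 {N : ℕ} (hN : 2 ≤ N) (Ω : Set (EN N)) (hΩo : IsOpen Ω)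
    (hΩne : Ω.Nonempty) (hΩb : Bornology.IsBounded Ω)
    (p q : EN N → ℝ) (hpc : Continuous p) (hqc : Continuous q)
    (c C : ℝ) (hc : 1 < c)
    (hpb : ∀ x ∈ Ω, c ≤ p x ∧ p x ≤ C)
    (hqb : ∀ x ∈ Ω, 1 ≤ q x ∧ q x ≤ C)
    (hA : (critSet p q Ω).Nonempty)
    (x₀ : EN N) (R : ℝ) (hR : 1 ≤ R) (hball : ball x₀ R ⊆ Ω)
    (pm pp qp : ℝ)
    (hpm : pm = sInf (p '' ball x₀ R)) (hpp : pp = sSup (p '' ball x₀ R))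
    (hqp : qp = sSup (q '' ball x₀ R))
    (u : EN N → ℝ) (hu : TestFn (ball (0 : EN N) 1) u) (hune : u ≠ 0)
    (hub : ∀ x ∈ ball (0 : EN N) 1, |u x| ≤ 1)
    (hgub : ∀ x ∈ ball (0 : EN N) 1, grad u x ≤ 1)
    (h1 : 1 < R ^ ((N : ℝ) - pp) * ∫ x in ball (0 : EN N) 1, grad u x ^ pp)
    (h2 : 1 < R ^ (N : ℝ) * ∫ x in ball (0 : EN N) 1, |u x| ^ qp)
    (h3 : R ^ (((N : ℝ) - pm) / pm - (N : ℝ) / qp) *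
        (luxNorm (ball (0 : EN N) 1) (fun _ => pm) (grad u) /
          luxNorm (ball (0 : EN N) 1) (fun _ => qp) u) < SbarCrit p q Ω) :
    sobolevConst p q Ω < SbarCrit p q Ω := by
  classical
  obtain ⟨hu_cd, hu_cs, hu_supp⟩ := hu
  have hR0 : (0:ℝ) < R := lt_of_lt_of_le one_pos hR
  have hRinv0 : (0:ℝ) < R⁻¹ := inv_pos.2 hR0
  set B1 : Set (EN N) := ball (0 : EN N) 1 with hB1def
  set A : EN N → EN N := fun x => R⁻¹ • (x - x₀) with hAdef
  set v : EN N → ℝ := fun x => u (A x) with hvdef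
  -- basic facts about u
  have hg_cont : Continuous (grad u) := (hu_cd.continuous_fderiv (by simp)).norm
  have hg_nonneg : ∀ y, 0 ≤ grad u y := fun y => norm_nonneg _
  have hu_zero : ∀ y, y ∉ B1 → u y = 0 := fun y hy =>
    image_eq_zero_of_notMem_tsupport fun h => hy (hu_supp h)
  have hg_zero : ∀ y, y ∉ B1 → grad u y = 0 := by
    intro y hy
    have h0 : fderiv ℝ u y = 0 := by
      by_contra h
      exact hy (hu_supp (support_fderiv_subset ℝ (Function.mem_support.2 h)))
    simp [grad, h0]
  have hub' : ∀ y, |u y| ≤ 1 := by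
    intro y; by_cases hy : y ∈ B1
    · exact hub y hy
    · simp [hu_zero y hy]
  have hgub' : ∀ y, grad u y ≤ 1 := by
    intro y; by_cases hy : y ∈ B1
    · exact hgub y hy
    · simp [hg_zero y hy]
  -- the affine map A
  have hA_cont : Continuous A := by
    rw [hAdef]; exact (continuous_id.sub continuous_const).const_smul R⁻¹
  have hA_mem : ∀ x, x ∈ ball x₀ R ↔ A x ∈ B1 := fun x => Stmt13Aux.mem_ball_scale x₀ hR0 x
  -- v is a test function on Ω
  have hv_cd : ContDiff ℝ (⊤ : ℕ∞) v := by
    rw [hvdef, hAdef]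
    exact hu_cd.comp ((contDiff_id.sub contDiff_const).const_smul R⁻¹)
  have hv_supp : tsupport v ⊆ ball x₀ R := by
    have hs1 : Function.support v ⊆ A ⁻¹' (tsupport u) := by
      intro x hx
      exact subset_closure (by exact hx)
    have hs2 : tsupport v ⊆ A ⁻¹' (tsupport u) :=
      closure_minimal hs1 ((isClosed_tsupport u).preimage hA_cont)
    intro x hx
    exact (hA_mem x).2 (hu_supp (hs2 hx))
  have hv_cs : HasCompactSupport v :=
    HasCompactSupport.intro (isCompact_closedBall x₀ R)
      (fun x hx => image_eq_zero_of_notMem_tsupport fun h => hx (ball_subset_closedBall (hv_supp h)))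
  have hv_test : TestFn Ω v := ⟨hv_cd, hv_cs, hv_supp.trans hball⟩
  have hv_ne : v ≠ 0 := by
    obtain ⟨y, hy⟩ := Function.ne_iff.mp hune
    intro h0
    apply hy
    have hAy : A (x₀ + R • y) = y := by
      rw [hAdef]; simp only []; rw [add_sub_cancel_left, inv_smul_smul₀ hR0.ne']
    have := congrFun h0 (x₀ + R • y)
    rw [hvdef] at this
    simp only [hAy] at this
    simpa using this
  -- gradient of v
  have hgradv : ∀ x, grad v x = R⁻¹ * grad u (A x) := by
    intro x
    have hdA : HasFDerivAt A (R⁻¹ • ContinuousLinearMap.id ℝ (EN N)) x := by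
      rw [hAdef]
      exact ((hasFDerivAt_id x).sub_const x₀).const_smul R⁻¹
    have hdu : HasFDerivAt u (fderiv ℝ u (A x)) (A x) :=
      ((hu_cd.differentiable (by simp)) (A x)).hasFDerivAt
    have hdv : HasFDerivAt v ((fderiv ℝ u (A x)).comp
        (R⁻¹ • ContinuousLinearMap.id ℝ (EN N))) x := hdu.comp x hdA
    have e1 : fderiv ℝ v x = (fderiv ℝ u (A x)).comp
        (R⁻¹ • ContinuousLinearMap.id ℝ (EN N)) := hdv.fderiv
    have e2 : (fderiv ℝ u (A x)).comp (R⁻¹ • ContinuousLinearMap.id ℝ (EN N))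
        = R⁻¹ • fderiv ℝ u (A x) := by
      ext w; simp
    simp only [grad]
    rw [e1, e2, norm_smul, Real.norm_eq_abs, abs_of_pos hRinv0]
  have hgv_cont : Continuous (grad v) := (hv_cd.continuous_fderiv (by simp)).norm
  have hgv_zero : ∀ x, x ∉ ball x₀ R → grad v x = 0 := by
    intro x hx
    rw [hgradv x, hg_zero _ (fun h => hx ((hA_mem x).2 h)), mul_zero]
  -- exponents
  have hx₀B : x₀ ∈ ball x₀ R := mem_ball_self hR0
  have hbddA : BddAbove (p '' ball x₀ R) :=
    ⟨C, by rintro y ⟨x, hx, rfl⟩; exact (hpb x (hball hx)).2⟩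
  have hbddB : BddBelow (p '' ball x₀ R) :=
    ⟨c, by rintro y ⟨x, hx, rfl⟩; exact (hpb x (hball hx)).1⟩
  have hbddAq : BddAbove (q '' ball x₀ R) :=
    ⟨C, by rintro y ⟨x, hx, rfl⟩; exact (hqb x (hball hx)).2⟩
  have hpm_le : ∀ x ∈ ball x₀ R, pm ≤ p x := fun x hx => hpm ▸ csInf_le hbddB ⟨x, hx, rfl⟩
  have hle_pp : ∀ x ∈ ball x₀ R, p x ≤ pp := fun x hx => hpp ▸ le_csSup hbddA ⟨x, hx, rfl⟩
  have hle_qp : ∀ x ∈ ball x₀ R, q x ≤ qp := fun x hx => hqp ▸ le_csSup hbddAq ⟨x, hx, rfl⟩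
  have hcpm : c ≤ pm := by
    rw [hpm]
    exact le_csInf ⟨p x₀, ⟨x₀, hx₀B, rfl⟩⟩
      (by rintro y ⟨x, hx, rfl⟩; exact (hpb x (hball hx)).1)
  have hpm1 : 1 < pm := lt_of_lt_of_le hc hcpm
  have hpm0 : 0 < pm := lt_trans one_pos hpm1
  have hpmpp : pm ≤ pp := le_trans (hpm_le x₀ hx₀B) (hle_pp x₀ hx₀B)
  have hpp0 : 0 < pp := lt_of_lt_of_le hpm0 hpmpp
  have hq1 : ∀ x ∈ Ω, 1 ≤ q x := fun x hx => (hqb x hx).1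
  have hqpos : ∀ x ∈ Ω, 0 < q x := fun x hx => lt_of_lt_of_le one_pos (hq1 x hx)
  have hqp1 : 1 ≤ qp := le_trans (hq1 x₀ (hball hx₀B)) (hle_qp x₀ hx₀B)
  have hqp0 : 0 < qp := lt_of_lt_of_le one_pos hqp1
  have hppos : ∀ x ∈ Ω, 0 < p x :=
    fun x hx => lt_trans one_pos (lt_of_lt_of_le hc (hpb x hx).1)
  -- measurability / finiteness
  have hB1m : MeasurableSet B1 := measurableSet_ball
  have hB1fin : volume B1 ≠ ⊤ := measure_ball_lt_top.ne
  have hBRm : MeasurableSet (ball x₀ R) := measurableSet_ball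
  have hBRfin : volume (ball x₀ R) ≠ ⊤ := measure_ball_lt_top.ne
  have hΩm : MeasurableSet Ω := hΩo.measurableSet
  have hΩfin : volume Ω ≠ ⊤ := hΩb.measure_lt_top.ne
  -- integral quantities
  set Ip := ∫ y in B1, grad u y ^ pm with hIpdef
  set Jp := ∫ y in B1, grad u y ^ pp with hJpdef
  set Iq := ∫ y in B1, |u y| ^ qp with hIqdef
  have hint_gpm : IntegrableOn (fun y => grad u y ^ pm) B1 volume := by
    apply Stmt13Aux.integrableOn_of_bdd hB1fin
      ((hg_cont.rpow_const (fun y => Or.inr hpm0.le)).aestronglyMeasurable) hB1m (M := 1)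
    intro y _
    beta_reduce
    rw [abs_of_nonneg (Real.rpow_nonneg (hg_nonneg y) _)]
    exact Real.rpow_le_one (hg_nonneg y) (hgub' y) hpm0.le
  have hint_gpp : IntegrableOn (fun y => grad u y ^ pp) B1 volume := by
    apply Stmt13Aux.integrableOn_of_bdd hB1fin
      ((hg_cont.rpow_const (fun y => Or.inr hpp0.le)).aestronglyMeasurable) hB1m (M := 1)
    intro y _
    beta_reduce
    rw [abs_of_nonneg (Real.rpow_nonneg (hg_nonneg y) _)]
    exact Real.rpow_le_one (hg_nonneg y) (hgub' y) hpp0.le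
  have hJp_le_Ip : Jp ≤ Ip := by
    apply setIntegral_mono_on hint_gpp hint_gpm hB1m
    intro y _
    beta_reduce
    rcases eq_or_lt_of_le (hg_nonneg y) with h0 | h0
    · rw [← h0, Real.zero_rpow hpp0.ne', Real.zero_rpow hpm0.ne']
    · exact Real.rpow_le_rpow_of_exponent_ge h0 (hgub' y) hpmpp
  have hJp_pos : 0 < Jp := by
    by_contra h
    push_neg at h
    have hRp : 0 < R ^ ((N:ℝ) - pp) := Real.rpow_pos_of_pos hR0 _
    nlinarith [h1]
  have hIp_pos : 0 < Ip := lt_of_lt_of_le hJp_pos hJp_le_Ip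
  have hIq_pos : 0 < Iq := by
    have hRp : 0 < R ^ ((N:ℝ)) := Real.rpow_pos_of_pos hR0 _
    by_contra h
    push_neg at h
    nlinarith [h2]
  -- the two scaling constants
  set lam := R ^ (((N:ℝ) - pm) / pm) * Ip ^ (1 / pm) with hlamdef
  set mu := R ^ ((N:ℝ) / qp) * Iq ^ (1 / qp) with hmudef
  have hlam0 : 0 < lam :=
    mul_pos (Real.rpow_pos_of_pos hR0 _) (Real.rpow_pos_of_pos hIp_pos _)
  have hmu0 : 0 < mu :=
    mul_pos (Real.rpow_pos_of_pos hR0 _) (Real.rpow_pos_of_pos hIq_pos _)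
  have hRlam_pow : (R * lam) ^ pm = R ^ (N:ℝ) * Ip := by
    have e1 : R * lam = R ^ ((N:ℝ) / pm) * Ip ^ (1 / pm) := by
      rw [hlamdef, ← mul_assoc,
        show (N:ℝ) / pm = 1 + ((N:ℝ) - pm) / pm by field_simp; ring,
        Real.rpow_add hR0, Real.rpow_one]
    rw [e1, Real.mul_rpow (Real.rpow_pos_of_pos hR0 _).le (Real.rpow_pos_of_pos hIp_pos _).le,
      ← Real.rpow_mul hR0.le, ← Real.rpow_mul hIp_pos.le,
      div_mul_cancel₀ _ hpm0.ne', div_mul_cancel₀ _ hpm0.ne', Real.rpow_one]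
  have hmu_pow : mu ^ qp = R ^ (N:ℝ) * Iq := by
    rw [hmudef, Real.mul_rpow (Real.rpow_pos_of_pos hR0 _).le (Real.rpow_pos_of_pos hIq_pos _).le,
      ← Real.rpow_mul hR0.le, ← Real.rpow_mul hIq_pos.le,
      div_mul_cancel₀ _ hqp0.ne', div_mul_cancel₀ _ hqp0.ne', Real.rpow_one]
  have hRNIp : 1 < R ^ (N:ℝ) * Ip :=
    lt_of_lt_of_le h1
      (mul_le_mul (Real.rpow_le_rpow_of_exponent_le hR (by linarith : (N:ℝ) - pp ≤ (N:ℝ)))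
        hJp_le_Ip hJp_pos.le (Real.rpow_pos_of_pos hR0 _).le)
  have hRlam1 : 1 ≤ R * lam := by
    by_contra h
    push_neg at h
    have := Real.rpow_lt_one (by positivity) h hpm0
    rw [hRlam_pow] at this
    linarith
  have hmu1 : 1 < mu := by
    by_contra h
    push_neg at h
    have := Real.rpow_le_one hmu0.le h hqp0.le
    rw [hmu_pow] at this
    linarith
  -- reduction of integrals over Ω to the ball
  have int_eq : ∀ f : EN N → ℝ, (∀ x ∈ Ω \ ball x₀ R, f x = 0) →
      ∫ x in Ω, f x = ∫ x in ball x₀ R, f x :=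
    fun f hf => setIntegral_eq_of_subset_of_forall_diff_eq_zero hΩm hball hf
  -- pointwise facts about grad v / lam
  have hgv_eq : ∀ x, |grad v x| / lam = grad u (A x) / (R * lam) := by
    intro x
    rw [hgradv x, abs_of_nonneg (mul_nonneg hRinv0.le (hg_nonneg _)), inv_mul_eq_div, div_div]
  have ht01 : ∀ x ∈ ball x₀ R,
      0 ≤ grad u (A x) / (R * lam) ∧ grad u (A x) / (R * lam) ≤ 1 := by
    intro x hx
    constructor
    · exact div_nonneg (hg_nonneg _) (mul_pos hR0 hlam0).le
    · rw [div_le_one (mul_pos hR0 hlam0)]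
      exact le_trans (hgub' _) hRlam1
  -- Estimate 1 : numerator
  have hnum : luxNorm Ω p (grad v) ≤ lam := by
    unfold luxNorm luxNormM
    apply csInf_le ⟨0, fun l hl => hl.1.le⟩
    refine ⟨hlam0, ?_⟩
    have hzero : ∀ x ∈ Ω \ ball x₀ R, (|grad v x| / lam) ^ p x = 0 := by
      intro x hx
      rw [hgv_zero x hx.2, abs_zero, zero_div, Real.zero_rpow (hppos x hx.1).ne']
    rw [int_eq _ hzero]
    have hptw : ∀ x ∈ ball x₀ R,
        (|grad v x| / lam) ^ p x ≤ (grad u (A x) / (R * lam)) ^ pm := by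
      intro x hx
      rw [hgv_eq x]
      rcases eq_or_lt_of_le (ht01 x hx).1 with h0 | h0
      · rw [← h0, Real.zero_rpow (hppos x (hball hx)).ne', Real.zero_rpow hpm0.ne']
      · exact Real.rpow_le_rpow_of_exponent_ge h0 (ht01 x hx).2 (hpm_le x hx)
    have hi1 : IntegrableOn (fun x => (|grad v x| / lam) ^ p x) (ball x₀ R) volume := by
      apply Stmt13Aux.integrableOn_of_bdd hBRfin
        (((hgv_cont.abs.div_const lam).measurable.pow hpc.measurable).aestronglyMeasurable)
        hBRm (M := 1)
      intro x hx
      beta_reduce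
      rw [abs_of_nonneg (Real.rpow_nonneg (div_nonneg (abs_nonneg _) hlam0.le) _), hgv_eq x]
      exact Real.rpow_le_one (ht01 x hx).1 (ht01 x hx).2
        (le_of_lt (hppos x (hball hx)))
    have hi2 : IntegrableOn (fun x => (grad u (A x) / (R * lam)) ^ pm) (ball x₀ R) volume := by
      apply Stmt13Aux.integrableOn_of_bdd hBRfin
        ((((hg_cont.comp hA_cont).div_const (R * lam)).rpow_const
          (fun x => Or.inr hpm0.le)).aestronglyMeasurable) hBRm (M := 1)
      intro x hx
      show |(grad u (A x) / (R * lam)) ^ pm| ≤ 1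
      rw [abs_of_nonneg (Real.rpow_nonneg (ht01 x hx).1 _)]
      exact Real.rpow_le_one (ht01 x hx).1 (ht01 x hx).2 hpm0.le
    calc ∫ x in ball x₀ R, (|grad v x| / lam) ^ p x
        ≤ ∫ x in ball x₀ R, (grad u (A x) / (R * lam)) ^ pm :=
          setIntegral_mono_on hi1 hi2 hBRm hptw
      _ = R ^ (N:ℕ) * ∫ y in B1, (grad u y / (R * lam)) ^ pm := by
          rw [hAdef]
          exact Stmt13Aux.scale_integral x₀ hR0 (fun y => (grad u y / (R * lam)) ^ pm)
      _ = R ^ (N:ℝ) * (Ip / (R * lam) ^ pm) := by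
          rw [← Real.rpow_natCast R N]
          congr 1
          rw [show (fun y => (grad u y / (R * lam)) ^ pm)
              = fun y => grad u y ^ pm / (R * lam) ^ pm from
            funext fun y => Real.div_rpow (hg_nonneg y) (mul_pos hR0 hlam0).le pm, integral_div]
      _ = 1 := by
          rw [hRlam_pow]
          have : R ^ (N:ℝ) * Ip ≠ 0 :=
            (mul_pos (Real.rpow_pos_of_pos hR0 _) hIp_pos).ne'
          field_simp
  -- Estimate 2 : denominator
  have hden : mu ≤ luxNorm Ω q v := by
    unfold luxNorm luxNormM
    apply le_csInf
    · -- the admissible set is nonempty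
      set l₀ : ℝ := max 1 (volume Ω).toReal with hl₀def
      have hl₀1 : 1 ≤ l₀ := le_max_left _ _
      have hl₀0 : 0 < l₀ := lt_of_lt_of_le one_pos hl₀1
      refine ⟨l₀, hl₀0, ?_⟩
      have hptw0 : ∀ x ∈ Ω, (|v x| / l₀) ^ q x ≤ 1 / l₀ := by
        intro x hx
        have ht0 : 0 ≤ |v x| / l₀ := div_nonneg (abs_nonneg _) hl₀0.le
        have ht1 : |v x| / l₀ ≤ 1 / l₀ := by
          exact (div_le_div_iff_of_pos_right hl₀0).2 (hub' (A x))
        have ht1' : |v x| / l₀ ≤ 1 := le_trans ht1 (by rw [div_le_one hl₀0]; exact hl₀1)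
        calc (|v x| / l₀) ^ q x ≤ (|v x| / l₀) ^ (1:ℝ) := by
              rcases eq_or_lt_of_le ht0 with h0 | h0
              · rw [← h0, Real.zero_rpow (hqpos x hx).ne', Real.rpow_one]
              · exact Real.rpow_le_rpow_of_exponent_ge h0 ht1' (hq1 x hx)
          _ = |v x| / l₀ := Real.rpow_one _
          _ ≤ 1 / l₀ := ht1
      have hi : IntegrableOn (fun x => (|v x| / l₀) ^ q x) Ω volume := by
        apply Stmt13Aux.integrableOn_of_bdd hΩfin
          (((hv_cd.continuous.abs.div_const l₀).measurable.pow hqc.measurable).aestronglyMeasurable)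
          hΩm (M := 1)
        intro x hx
        beta_reduce
        rw [abs_of_nonneg (Real.rpow_nonneg (div_nonneg (abs_nonneg _) hl₀0.le) _)]
        exact le_trans (hptw0 x hx) (by rw [div_le_one hl₀0]; exact hl₀1)
      calc ∫ x in Ω, (|v x| / l₀) ^ q x
          ≤ ∫ _x in Ω, 1 / l₀ :=
            setIntegral_mono_on hi (integrableOn_const hΩb.measure_lt_top.ne) hΩm hptw0
        _ = (volume Ω).toReal * (1 / l₀) := by rw [setIntegral_const, smul_eq_mul]; rfl
        _ ≤ 1 := by
            rw [mul_one_div, div_le_one hl₀0]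
            exact le_max_right _ _
    · rintro l ⟨hl0, hle⟩
      set l' := max l 1 with hl'def
      have hl'1 : 1 ≤ l' := le_max_right _ _
      have hl'0 : 0 < l' := lt_of_lt_of_le one_pos hl'1
      have hll' : l ≤ l' := le_max_left _ _
      have hptw : ∀ x ∈ ball x₀ R, (|u (A x)| / l') ^ qp ≤ (|v x| / l) ^ q x := by
        intro x hx
        have hxΩ : x ∈ Ω := hball hx
        have ht0 : 0 ≤ |u (A x)| / l' := div_nonneg (abs_nonneg _) hl'0.le
        have ht1 : |u (A x)| / l' ≤ 1 := by
          rw [div_le_one hl'0]; exact le_trans (hub' _) hl'1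
        have step1 : (|u (A x)| / l') ^ qp ≤ (|u (A x)| / l') ^ q x := by
          rcases eq_or_lt_of_le ht0 with h0 | h0
          · rw [← h0, Real.zero_rpow hqp0.ne', Real.zero_rpow (hqpos x hxΩ).ne']
          · exact Real.rpow_le_rpow_of_exponent_ge h0 ht1 (hle_qp x hx)
        have step2 : (|u (A x)| / l') ^ q x ≤ (|u (A x)| / l) ^ q x :=
          Real.rpow_le_rpow ht0
            (div_le_div_of_nonneg_left (abs_nonneg _) hl0 hll')
            (le_of_lt (hqpos x hxΩ))
        exact step1.trans step2
      have hiL : IntegrableOn (fun x => (|u (A x)| / l') ^ qp) (ball x₀ R) volume := by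
        apply Stmt13Aux.integrableOn_of_bdd hBRfin
          ((((hu_cd.continuous.comp hA_cont).abs.div_const l').rpow_const
            (fun x => Or.inr hqp0.le)).aestronglyMeasurable) hBRm (M := 1)
        intro x hx
        have ht0 : 0 ≤ |u (A x)| / l' := div_nonneg (abs_nonneg _) hl'0.le
        have ht1 : |u (A x)| / l' ≤ 1 := by
          rw [div_le_one hl'0]; exact le_trans (hub' _) hl'1
        show |(|u (A x)| / l') ^ qp| ≤ 1
        rw [abs_of_nonneg (Real.rpow_nonneg ht0 _)]
        exact Real.rpow_le_one ht0 ht1 hqp0.le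
      have hiR : IntegrableOn (fun x => (|v x| / l) ^ q x) Ω volume := by
        apply Stmt13Aux.integrableOn_of_bdd hΩfin
          (((hv_cd.continuous.abs.div_const l).measurable.pow hqc.measurable).aestronglyMeasurable)
          hΩm (M := (max 1 l⁻¹) ^ C)
        intro x hx
        have hb1 : (1:ℝ) ≤ max 1 l⁻¹ := le_max_left _ _
        have ht0 : 0 ≤ |v x| / l := div_nonneg (abs_nonneg _) hl0.le
        have htb : |v x| / l ≤ max 1 l⁻¹ := by
          refine le_trans ?_ (le_max_right _ _)
          rw [div_le_iff₀ hl0, inv_mul_cancel₀ hl0.ne']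
          exact hub' (A x)
        beta_reduce
        rw [abs_of_nonneg (Real.rpow_nonneg ht0 _)]
        calc (|v x| / l) ^ q x ≤ (max 1 l⁻¹) ^ q x :=
              Real.rpow_le_rpow ht0 htb (le_of_lt (hqpos x hx))
          _ ≤ (max 1 l⁻¹) ^ C :=
              Real.rpow_le_rpow_of_exponent_le hb1 (hqb x hx).2
      have key : (mu / l') ^ qp ≤ 1 := by
        have e2 : ∫ x in ball x₀ R, (|u (A x)| / l') ^ qp = R ^ (N:ℝ) * (Iq / l' ^ qp) := by
          rw [hAdef]
          rw [Stmt13Aux.scale_integral x₀ hR0 (fun y => (|u y| / l') ^ qp),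
            ← Real.rpow_natCast R N]
          congr 1
          rw [show (fun y => (|u y| / l') ^ qp) = fun y => |u y| ^ qp / l' ^ qp from
            funext fun y => Real.div_rpow (abs_nonneg _) hl'0.le qp, integral_div]
        calc (mu / l') ^ qp = ∫ x in ball x₀ R, (|u (A x)| / l') ^ qp := by
              rw [Real.div_rpow hmu0.le hl'0.le, hmu_pow, e2, mul_div_assoc]
          _ ≤ ∫ x in ball x₀ R, (|v x| / l) ^ q x :=
              setIntegral_mono_on hiL (hiR.mono_set hball) hBRm hptw
          _ ≤ ∫ x in Ω, (|v x| / l) ^ q x :=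
              setIntegral_mono_set hiR
                (Filter.Eventually.of_forall fun x => Real.rpow_nonneg (div_nonneg (abs_nonneg _) hl0.le) _)
                (HasSubset.Subset.eventuallyLE hball)
          _ ≤ 1 := hle
      have hmul' : mu ≤ l' := by
        by_contra h
        push_neg at h
        have h1' : 1 < mu / l' := (one_lt_div hl'0).2 h
        have : 1 < (mu / l') ^ qp :=
          (Real.one_lt_rpow_iff_of_pos (lt_trans one_pos h1')).2 (Or.inl ⟨h1', hqp0⟩)
        linarith
      rcases le_or_gt 1 l with hcase | hcase
      · rwa [hl'def, max_eq_left hcase] at hmul'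
      · exfalso
        rw [hl'def, max_eq_right hcase.le] at hmul'
        linarith
  -- conclusion
  have hbdd : BddBelow {s : ℝ | ∃ w : EN N → ℝ, TestFn Ω w ∧ w ≠ 0 ∧
      s = luxNorm Ω p (grad w) / luxNorm Ω q w} := by
    refine ⟨0, ?_⟩
    rintro s ⟨w, _, _, rfl⟩
    exact div_nonneg (Stmt13Aux.luxNorm_nonneg _ _ _) (Stmt13Aux.luxNorm_nonneg _ _ _)
  have hsle : sobolevConst p q Ω ≤ luxNorm Ω p (grad v) / luxNorm Ω q v :=
    csInf_le hbdd ⟨v, hv_test, hv_ne, rfl⟩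
  have hratio : luxNorm Ω p (grad v) / luxNorm Ω q v ≤ lam / mu :=
    div_le_div₀ hlam0.le hnum hmu0 hden
  have hNp : luxNorm B1 (fun _ => pm) (grad u) = Ip ^ (1 / pm) := by
    have habs : (fun y => |grad u y| ^ pm) = fun y => grad u y ^ pm :=
      funext fun y => by rw [abs_of_nonneg (hg_nonneg y)]
    rw [Stmt13Aux.luxNorm_const B1 hpm0 (grad u) (by rw [habs]; exact hIp_pos), habs]
  have hNq : luxNorm B1 (fun _ => qp) u = Iq ^ (1 / qp) :=
    Stmt13Aux.luxNorm_const B1 hqp0 u hIq_pos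
  have hfin : lam / mu = R ^ (((N:ℝ) - pm) / pm - (N:ℝ) / qp) *
      (luxNorm B1 (fun _ => pm) (grad u) / luxNorm B1 (fun _ => qp) u) := by
    rw [hNp, hNq, hlamdef, hmudef, Real.rpow_sub hR0]
    ring
  calc sobolevConst p q Ω ≤ luxNorm Ω p (grad v) / luxNorm Ω q v := hsle
    _ ≤ lam / mu := hratio
    _ = _ := hfin
    _ < SbarCrit p q Ω := h3
end
end

section
/- Let x₀ ∈ ℝ^N and R ≥ 1 with B_R(x₀) ⊆ Ω, write p_R^− := inf_{B_R(x₀)} p and p_R^+ := sup_{B_R(x₀)} p, and let u ∈ C_c^∞(B_1(0)) with |∇u| ≤ 1 on B_1(0). Define u_R(x) := u((x − x₀)/R). If R^{N − p_R^+}·∫_{B_1(0)} |∇u|^{p_R^+} dx > 1, then ‖|∇u_R|‖_{L^{p(·)}(B_R(x₀))} ≤ R^{(N − p_R^−)/p_R^−}·(∫_{B_1(0)} |∇u|^{p_R^−} dx)^{1/p_R^−}. -/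
open MeasureTheory Metric Set Filter Topology

noncomputable section

private lemma measurable_rpow_aux {α : Type*} [MeasurableSpace α] {f g : α → ℝ}
    (hf : Measurable f) (hg : Measurable g) (h0 : ∀ x, 0 ≤ f x) :
    Measurable fun x => f x ^ g x := by
  have heq : (fun x => f x ^ g x) = fun x =>
      if f x = 0 then (if g x = 0 then 1 else 0)
      else Real.exp (Real.log (f x) * g x) := by
    ext x
    split_ifs with h h2
    · simp [h, h2]
    · simp [h, Real.zero_rpow h2]
    · exact Real.rpow_def_of_pos (lt_of_le_of_ne (h0 x) (Ne.symm h)) _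
  rw [heq]
  refine Measurable.ite (hf (measurableSet_singleton 0)) ?_ ?_
  · exact Measurable.ite (hg (measurableSet_singleton 0)) measurable_const measurable_const
  · exact Real.measurable_exp.comp ((Real.measurable_log.comp hf).mul hg)

/-- upper bound for the variable exponent gradient norm of the rescaled
function `u_R`. -/
theorem stmt14 {N : ℕ} (hN : 2 ≤ N) (Ω : Set (EN N)) (hΩo : IsOpen Ω)
    (hΩne : Ω.Nonempty) (hΩb : Bornology.IsBounded Ω)
    (p : EN N → ℝ) (hpc : Continuous p)
    (c C : ℝ) (hc : 1 < c)
    (hpb : ∀ x ∈ Ω, c ≤ p x ∧ p x ≤ C)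
    (x₀ : EN N) (R : ℝ) (hR : 1 ≤ R) (hball : ball x₀ R ⊆ Ω)
    (pm pp : ℝ)
    (hpm : pm = sInf (p '' ball x₀ R)) (hpp : pp = sSup (p '' ball x₀ R))
    (u : EN N → ℝ) (hu : TestFn (ball (0 : EN N) 1) u)
    (hgub : ∀ x ∈ ball (0 : EN N) 1, grad u x ≤ 1)
    (h1 : 1 < R ^ ((N : ℝ) - pp) * ∫ x in ball (0 : EN N) 1, grad u x ^ pp) :
    luxNorm (ball x₀ R) p (grad (fun x => u (R⁻¹ • (x - x₀)))) ≤
      R ^ (((N : ℝ) - pm) / pm) *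
        (∫ x in ball (0 : EN N) 1, grad u x ^ pm) ^ (1 / pm) := by
  have hR0 : (0 : ℝ) < R := lt_of_lt_of_le one_pos hR
  set g : EN N → ℝ := grad u with hg
  set Im : ℝ := ∫ x in ball (0 : EN N) 1, g x ^ pm with hIm
  set Ip : ℝ := ∫ x in ball (0 : EN N) 1, g x ^ pp with hIp
  set lam : ℝ := R ^ (((N : ℝ) - pm) / pm) * Im ^ (1 / pm) with hlam
  -- basic facts about p, pm, pp
  have hx₀mem : x₀ ∈ ball x₀ R := mem_ball_self hR0
  have himgne : (p '' ball x₀ R).Nonempty := ⟨p x₀, mem_image_of_mem p hx₀mem⟩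
  have hbdd_below : BddBelow (p '' ball x₀ R) := by
    refine ⟨c, ?_⟩; rintro _ ⟨x, hx, rfl⟩; exact (hpb x (hball hx)).1
  have hbdd_above : BddAbove (p '' ball x₀ R) := by
    refine ⟨C, ?_⟩; rintro _ ⟨x, hx, rfl⟩; exact (hpb x (hball hx)).2
  have hcpm : c ≤ pm := by
    rw [hpm]; exact le_csInf himgne (by rintro _ ⟨x, hx, rfl⟩; exact (hpb x (hball hx)).1)
  have hpm0 : 0 < pm := lt_of_lt_of_le (lt_trans one_pos hc) hcpm
  have hpmle : ∀ x ∈ ball x₀ R, pm ≤ p x := by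
    intro x hx; rw [hpm]; exact csInf_le hbdd_below (mem_image_of_mem p hx)
  have hlepp : ∀ x ∈ ball x₀ R, p x ≤ pp := by
    intro x hx; rw [hpp]; exact le_csSup hbdd_above (mem_image_of_mem p hx)
  have hpmpp : pm ≤ pp := le_trans (hpmle x₀ hx₀mem) (hlepp x₀ hx₀mem)
  have hpp0 : 0 < pp := lt_of_lt_of_le hpm0 hpmpp
  -- facts about g
  have hg0 : ∀ x, 0 ≤ g x := fun x => norm_nonneg _
  have hgcont : Continuous g := by
    have : Continuous (fderiv ℝ u) := (hu.1.continuous_fderiv (by simp))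
    exact this.norm
  -- integrability of g ^ pm and g ^ pp on unit ball
  have hint : ∀ q : ℝ, 0 < q → IntegrableOn (fun x => g x ^ q) (ball (0 : EN N) 1) volume := by
    intro q hq
    refine Measure.integrableOn_of_bounded (M := 1) measure_ball_lt_top.ne
      ((hgcont.rpow_const (fun x => Or.inr hq.le)).measurable.aestronglyMeasurable) ?_
    filter_upwards [ae_restrict_mem measurableSet_ball] with x hx
    rw [Real.norm_eq_abs, abs_of_nonneg (Real.rpow_nonneg (hg0 x) q)]
    exact Real.rpow_le_one (hg0 x) (hgub x hx) hq.le
  -- I_p ≤ I_m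
  have hIpIm : Ip ≤ Im := by
    refine setIntegral_mono_on (hint pp hpp0) (hint pm hpm0) measurableSet_ball ?_
    intro x hx
    exact Real.rpow_le_rpow_of_exponent_ge' (hg0 x) (hgub x hx) hpm0.le hpmpp
  have hRpow : ∀ e : ℝ, (0:ℝ) < R ^ e := fun e => Real.rpow_pos_of_pos hR0 e
  have hIp0 : 0 < Ip := by
    by_contra h
    push_neg at h
    have : R ^ ((N : ℝ) - pp) * Ip ≤ 0 := mul_nonpos_of_nonneg_of_nonpos (hRpow _).le h
    linarith
  have hIm0 : 0 < Im := lt_of_lt_of_le hIp0 hIpIm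
  have hlam0 : 0 < lam := mul_pos (hRpow _) (Real.rpow_pos_of_pos hIm0 _)
  -- lam ^ pm = R ^ (N - pm) * Im
  have hlampm : lam ^ pm = R ^ ((N : ℝ) - pm) * Im := by
    rw [hlam, Real.mul_rpow (hRpow _).le (Real.rpow_pos_of_pos hIm0 _).le,
      ← Real.rpow_mul hR0.le, ← Real.rpow_mul hIm0.le,
      div_mul_cancel₀ _ hpm0.ne', one_div, inv_mul_cancel₀ hpm0.ne', Real.rpow_one]
  -- (R * lam) ^ pm = R ^ N * Im > 1
  have hRlam_pow : (R * lam) ^ pm = R ^ (N : ℝ) * Im := by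
    rw [Real.mul_rpow hR0.le hlam0.le, hlampm, ← mul_assoc, ← Real.rpow_add hR0]
    ring_nf
  have hRNIm : 1 < R ^ (N : ℝ) * Im := by
    calc (1:ℝ) < R ^ ((N : ℝ) - pp) * Ip := h1
    _ ≤ R ^ (N : ℝ) * Im := by
        apply mul_le_mul (Real.rpow_le_rpow_of_exponent_le hR (by linarith)) hIpIm hIp0.le
          (hRpow _).le
  have hRlam1 : 1 < R * lam := by
    have h2 : 1 < (R * lam) ^ pm := by rw [hRlam_pow]; exact hRNIm
    rcases (Real.one_lt_rpow_iff_of_pos (mul_pos hR0 hlam0)).1 h2 with ⟨h, _⟩ | ⟨_, h⟩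
    · exact h
    · linarith
  have hRlam0 : 0 < R * lam := mul_pos hR0 hlam0
  -- the rescaling map
  set φ : EN N → EN N := fun x => R⁻¹ • (x - x₀) with hφ
  have hφmem : ∀ x : EN N, x ∈ ball x₀ R ↔ φ x ∈ ball (0 : EN N) 1 := by
    intro x
    rw [mem_ball, mem_ball, dist_eq_norm, dist_eq_norm, sub_zero, hφ]
    simp only [norm_smul, norm_inv, Real.norm_eq_abs, abs_of_pos hR0]
    rw [inv_mul_lt_iff₀ hR0, mul_one]
  -- gradient of the rescaled function
  have hgrad : ∀ x : EN N, grad (fun x => u (R⁻¹ • (x - x₀))) x = R⁻¹ * g (φ x) := by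
    intro x
    have hA : HasFDerivAt (fun x : EN N => R⁻¹ • (x - x₀))
        (R⁻¹ • ContinuousLinearMap.id ℝ (EN N)) x :=
      ((hasFDerivAt_id x).sub_const x₀).const_smul R⁻¹
    have hu' : HasFDerivAt u (fderiv ℝ u (φ x)) (φ x) :=
      ((hu.1.differentiable (by simp)) (φ x)).hasFDerivAt
    have hcomp := hu'.comp x hA
    have heq : (fderiv ℝ u (φ x)).comp (R⁻¹ • ContinuousLinearMap.id ℝ (EN N))
        = R⁻¹ • fderiv ℝ u (φ x) := by
      ext v; simp
    rw [heq] at hcomp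
    have : fderiv ℝ (fun x => u (R⁻¹ • (x - x₀))) x = R⁻¹ • fderiv ℝ u (φ x) :=
      hcomp.fderiv
    rw [grad, this, norm_smul, norm_inv, Real.norm_eq_abs, abs_of_pos hR0]
    rfl
  -- the comparison function
  set F : EN N → ℝ := fun y => (g y / (R * lam)) ^ pm with hF
  have hFcont : Continuous F :=
    (hgcont.div_const _).rpow_const (fun x => Or.inr hpm0.le)
  have hF0 : ∀ y, 0 ≤ F y := fun y => Real.rpow_nonneg (div_nonneg (hg0 y) hRlam0.le) _
  -- pointwise bound on the ball
  have hptwise : ∀ x ∈ ball x₀ R,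
      (|grad (fun x => u (R⁻¹ • (x - x₀))) x| / lam) ^ (p x) ≤ F (φ x) := by
    intro x hx
    have hy : φ x ∈ ball (0 : EN N) 1 := (hφmem x).1 hx
    have hbase : |grad (fun x => u (R⁻¹ • (x - x₀))) x| / lam = g (φ x) / (R * lam) := by
      rw [hgrad x, abs_of_nonneg (mul_nonneg (inv_nonneg.2 hR0.le) (hg0 _)),
        inv_mul_eq_div, div_div]
    rw [hbase, hF]
    have ht0 : 0 ≤ g (φ x) / (R * lam) := div_nonneg (hg0 _) hRlam0.le
    have ht1 : g (φ x) / (R * lam) ≤ 1 :=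
      (div_le_one hRlam0).2 (le_trans (hgub _ hy) hRlam1.le)
    exact Real.rpow_le_rpow_of_exponent_ge' ht0 ht1 hpm0.le (hpmle x hx)
  -- integrability on ball x₀ R
  have hgrcont : Continuous (grad (fun x : EN N => u (R⁻¹ • (x - x₀)))) := by
    have : ContDiff ℝ (⊤ : ℕ∞) (fun x : EN N => u (R⁻¹ • (x - x₀))) :=
      hu.1.comp (((contDiff_id.sub contDiff_const)).const_smul R⁻¹)
    exact (this.continuous_fderiv (by simp)).norm
  have hintL : IntegrableOn
      (fun x => (|grad (fun x => u (R⁻¹ • (x - x₀))) x| / lam) ^ (p x))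
      (ball x₀ R) volume := by
    refine Measure.integrableOn_of_bounded (M := 1) measure_ball_lt_top.ne ?_ ?_
    · exact (measurable_rpow_aux ((hgrcont.abs.div_const lam).measurable) hpc.measurable
        (fun x => div_nonneg (abs_nonneg _) hlam0.le)).aestronglyMeasurable
    · filter_upwards [ae_restrict_mem measurableSet_ball] with x hx
      have hb0 : 0 ≤ |grad (fun x => u (R⁻¹ • (x - x₀))) x| / lam :=
        div_nonneg (abs_nonneg _) hlam0.le
      rw [Real.norm_eq_abs, abs_of_nonneg (Real.rpow_nonneg hb0 _)]
      have hy : φ x ∈ ball (0 : EN N) 1 := (hφmem x).1 hx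
      have hb1 : |grad (fun x => u (R⁻¹ • (x - x₀))) x| / lam ≤ 1 := by
        rw [hgrad x, abs_of_nonneg (mul_nonneg (inv_nonneg.2 hR0.le) (hg0 _)),
          inv_mul_eq_div, div_div, div_le_one hRlam0]
        exact le_trans (hgub _ hy) hRlam1.le
      exact Real.rpow_le_one hb0 hb1 (le_trans hpm0.le (hpmle x hx))
  have hintR : IntegrableOn (fun x => F (φ x)) (ball x₀ R) volume := by
    refine Measure.integrableOn_of_bounded (M := 1) measure_ball_lt_top.ne
      ((hFcont.comp ((continuous_id.sub continuous_const).const_smul R⁻¹)).measurable.aestronglyMeasurable) ?_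
    filter_upwards [ae_restrict_mem measurableSet_ball] with x hx
    have hy : φ x ∈ ball (0 : EN N) 1 := (hφmem x).1 hx
    rw [Real.norm_eq_abs, abs_of_nonneg (hF0 _)]
    exact Real.rpow_le_one (div_nonneg (hg0 _) hRlam0.le)
      ((div_le_one hRlam0).2 (le_trans (hgub _ hy) hRlam1.le)) hpm0.le
  -- change of variables
  have hchange : ∫ x in ball x₀ R, F (φ x) = (R ^ (N : ℕ) : ℝ) * ∫ y in ball (0 : EN N) 1, F y := by
    have hind : (ball x₀ R).indicator (fun x => F (φ x))
        = fun x => ((ball (0 : EN N) 1).indicator F) (φ x) := by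
      ext x
      by_cases hx : x ∈ ball x₀ R
      · rw [indicator_of_mem hx, indicator_of_mem ((hφmem x).1 hx)]
      · rw [indicator_of_notMem hx, indicator_of_notMem (fun h => hx ((hφmem x).2 h))]
    rw [← integral_indicator measurableSet_ball, hind]
    have h2 : ∫ x : EN N, ((ball (0 : EN N) 1).indicator F) (R⁻¹ • (x - x₀))
        = ∫ x : EN N, ((ball (0 : EN N) 1).indicator F) (R⁻¹ • x) :=
      integral_sub_right_eq_self (fun z => ((ball (0 : EN N) 1).indicator F) (R⁻¹ • z)) x₀
    rw [show (fun x => ((ball (0 : EN N) 1).indicator F) (φ x))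
        = fun x => ((ball (0 : EN N) 1).indicator F) (R⁻¹ • (x - x₀)) from rfl, h2,
      Measure.integral_comp_inv_smul_of_nonneg volume ((ball (0 : EN N) 1).indicator F) hR0.le,
      integral_indicator measurableSet_ball]
    simp [finrank_euclideanSpace_fin, smul_eq_mul]
  -- value of the right integral
  have hFval : ∫ y in ball (0 : EN N) 1, F y = Im / (R * lam) ^ pm := by
    rw [hF]
    have : (fun y => (g y / (R * lam)) ^ pm)
        = fun y => g y ^ pm / (R * lam) ^ pm := by
      ext y; exact Real.div_rpow (hg0 y) hRlam0.le pm
    rw [this]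
    rw [integral_div]
  -- total modular value = 1
  have htotal : (R ^ (N : ℕ) : ℝ) * ∫ y in ball (0 : EN N) 1, F y = 1 := by
    have hne : R ^ ((N : ℝ)) * Im ≠ 0 := ne_of_gt (mul_pos (hRpow _) hIm0)
    rw [hFval, hRlam_pow, ← Real.rpow_natCast R N, mul_div_assoc', div_self hne]
  -- conclude
  have hmem : lam ∈ {l : ℝ | 0 < l ∧
      (∫ x in ball x₀ R,
        (|grad (fun x => u (R⁻¹ • (x - x₀))) x| / l) ^ (p x) ∂volume) ≤ 1} := by
    refine ⟨hlam0, ?_⟩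
    calc ∫ x in ball x₀ R, (|grad (fun x => u (R⁻¹ • (x - x₀))) x| / lam) ^ (p x)
        ≤ ∫ x in ball x₀ R, F (φ x) :=
          setIntegral_mono_on hintL hintR measurableSet_ball hptwise
      _ = (R ^ (N : ℕ) : ℝ) * ∫ y in ball (0 : EN N) 1, F y := hchange
      _ = 1 := htotal
  have hbdd : BddBelow {l : ℝ | 0 < l ∧
      (∫ x in ball x₀ R,
        (|grad (fun x => u (R⁻¹ • (x - x₀))) x| / l) ^ (p x) ∂volume) ≤ 1} :=
    ⟨0, fun l hl => hl.1.le⟩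
  exact csInf_le hbdd hmem
end
end
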